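/- arXiv:2003.09142 — 10 statements merged into one kernel-verified Lean document; each statement's English description precedes it below -/
import Mathlib

section
/- Suppose ☐ is a weak shuffle product on K⟨X⟩ (i.e. an associative and commutative bilinear product with 1 ☐ u = u ☐ 1 = u and (a·u) ☐ (b·v) = f₁(a⊗b)·a·(u ☐ (b·v)) + f₂(a⊗b)·b·((a·u) ☐ v) for scalar-valued maps f₁, f₂). Then for any two distinct letters a, b one has f₁(a⊗b) = f₂(b⊗a). -/
/-- If `☐` (given by the bilinear map `B`) is a weak shuffle product on `K⟨X⟩`
with structure constants `f₁, f₂`, then `f₁(a⊗b) = f₂(b⊗a)` for distinct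
letters `a, b`. -/
theorem weakShuffle_f1_eq_f2_swap {K X : Type*} [Field K] [CharZero K]
    (B : (List X →₀ K) →ₗ[K] (List X →₀ K) →ₗ[K] (List X →₀ K))
    (f1 f2 : X → X → K)
    (hcomm : ∀ x y, B x y = B y x)
    (hassoc : ∀ x y z, B (B x y) z = B x (B y z))
    (hunit : ∀ x, B (Finsupp.single [] 1) x = x)
    (hrec : ∀ (a b : X) (u v : List X),
      B (Finsupp.single (a :: u) 1) (Finsupp.single (b :: v) 1) =
        f1 a b • Finsupp.mapDomain (a :: ·)
            (B (Finsupp.single u 1) (Finsupp.single (b :: v) 1)) +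
        f2 a b • Finsupp.mapDomain (b :: ·)
            (B (Finsupp.single (a :: u) 1) (Finsupp.single v 1)))
    (a b : X) (hab : a ≠ b) :
    f1 a b = f2 b a := by
  have hunit' : ∀ x, B x (Finsupp.single [] 1) = x := fun x => by
    rw [hcomm]; exact hunit x
  have key : ∀ (c d : X), B (Finsupp.single [c] 1) (Finsupp.single [d] 1) =
      f1 c d • Finsupp.single [c, d] 1 + f2 c d • Finsupp.single [d, c] 1 := by
    intro c d
    rw [hrec c d [] [], hunit, hunit', Finsupp.mapDomain_single, Finsupp.mapDomain_single]
  have h := hcomm (Finsupp.single [a] 1) (Finsupp.single [b] 1)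
  rw [key a b, key b a] at h
  have h2 := congrFun (congrArg DFunLike.coe h) [a, b]
  have hne : ([b, a] : List X) ≠ [a, b] := by simp [hab, Ne.symm hab]
  simp only [Finsupp.add_apply, Finsupp.smul_apply, smul_eq_mul,
    Finsupp.single_eq_same, Finsupp.single_eq_of_ne' hne] at h2
  simpa using h2
end

section
/- Suppose ☐ is a weak shuffle product on K⟨X⟩ determined by structure constants f₁, f₂. Then for any three distinct letters a, b, c, the identity f₁(a⊗b)·f₁(b⊗c)·(f₁(a⊗c) − 1) = 0 holds. -/
/-- For a weak shuffle product with structure constants `f₁, f₂`, for any three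
distinct letters `a, b, c`, one has `f₁(a⊗b)·f₁(b⊗c)·(f₁(a⊗c) − 1) = 0`. -/
theorem weakShuffle_triple_relation {K X : Type*} [Field K] [CharZero K]
    (B : (List X →₀ K) →ₗ[K] (List X →₀ K) →ₗ[K] (List X →₀ K))
    (f1 f2 : X → X → K)
    (hcomm : ∀ x y, B x y = B y x)
    (hassoc : ∀ x y z, B (B x y) z = B x (B y z))
    (hunit : ∀ x, B (Finsupp.single [] 1) x = x)
    (hrec : ∀ (a b : X) (u v : List X),
      B (Finsupp.single (a :: u) 1) (Finsupp.single (b :: v) 1) =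
        f1 a b • Finsupp.mapDomain (a :: ·)
            (B (Finsupp.single u 1) (Finsupp.single (b :: v) 1)) +
        f2 a b • Finsupp.mapDomain (b :: ·)
            (B (Finsupp.single (a :: u) 1) (Finsupp.single v 1)))
    (a b c : X) (hab : a ≠ b) (hbc : b ≠ c) (hac : a ≠ c) :
    f1 a b * f1 b c * (f1 a c - 1) = 0 := by
  classical
  have hunit' : ∀ x, B x (Finsupp.single [] 1) = x := fun x => by
    rw [hcomm]; exact hunit x
  -- single letter products
  have one1 : ∀ x y : X, B (Finsupp.single [x] 1) (Finsupp.single [y] 1)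
      = f1 x y • Finsupp.single [x, y] 1 + f2 x y • Finsupp.single [y, x] 1 := by
    intro x y
    rw [hrec x y [] []]
    simp [hunit, hunit', Finsupp.mapDomain_single]
  -- two letter products needed
  have hABC : B (Finsupp.single [a, b] 1) (Finsupp.single [c] 1)
      = (f1 a c * f1 b c) • Finsupp.single [a, b, c] 1
        + (f1 a c * f2 b c) • Finsupp.single [a, c, b] 1
        + f2 a c • Finsupp.single [c, a, b] 1 := by
    rw [hrec a c [b] [], one1 b c]
    simp [hunit', Finsupp.mapDomain_add, Finsupp.mapDomain_smul,
      Finsupp.mapDomain_single, smul_smul, add_assoc]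
  have hBAC : B (Finsupp.single [b, a] 1) (Finsupp.single [c] 1)
      = (f1 b c * f1 a c) • Finsupp.single [b, a, c] 1
        + (f1 b c * f2 a c) • Finsupp.single [b, c, a] 1
        + f2 b c • Finsupp.single [c, b, a] 1 := by
    rw [hrec b c [a] [], one1 a c]
    simp [hunit', Finsupp.mapDomain_add, Finsupp.mapDomain_smul,
      Finsupp.mapDomain_single, smul_smul, add_assoc]
  have hA_BC : B (Finsupp.single [a] 1) (Finsupp.single [b, c] 1)
      = f1 a b • Finsupp.single [a, b, c] 1
        + (f2 a b * f1 a c) • Finsupp.single [b, a, c] 1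
        + (f2 a b * f2 a c) • Finsupp.single [b, c, a] 1 := by
    rw [hrec a b [] [c], one1 a c]
    simp [hunit, Finsupp.mapDomain_add, Finsupp.mapDomain_smul,
      Finsupp.mapDomain_single, smul_smul, add_assoc]
  have hA_CB : B (Finsupp.single [a] 1) (Finsupp.single [c, b] 1)
      = f1 a c • Finsupp.single [a, c, b] 1
        + (f2 a c * f1 a b) • Finsupp.single [c, a, b] 1
        + (f2 a c * f2 a b) • Finsupp.single [c, b, a] 1 := by
    rw [hrec a c [] [b], one1 a b]
    simp [hunit, Finsupp.mapDomain_add, Finsupp.mapDomain_smul,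
      Finsupp.mapDomain_single, smul_smul, add_assoc]
  have key := hassoc (Finsupp.single [a] 1) (Finsupp.single [b] 1)
    (Finsupp.single [c] 1)
  rw [one1 a b, one1 b c] at key
  simp only [map_add, map_smul, LinearMap.add_apply, LinearMap.smul_apply] at key
  rw [hABC, hBAC, hA_BC, hA_CB] at key
  have hk := DFunLike.congr_fun key [a, b, c]
  simp [Finsupp.single_apply, hab, hbc, hac, hab.symm, hbc.symm, hac.symm] at hk
  ring_nf at hk ⊢
  linear_combination hk
end

section
/- Suppose ☐ is a weak shuffle product on K⟨X⟩ and a, b are distinct letters with f₁(a⊗b) = f₁(b⊗a) = 1. Then f₁(a⊗a) = f₂(a⊗a) = f₁(b⊗b) = f₂(b⊗b) = 1, and for any third letter c, f₁(a⊗c) = f₁(b⊗c) ∈ {0,1} and f₁(c⊗a) = f₁(c⊗b) ∈ {0,1}. -/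
/-- For a weak shuffle product, if `a ≠ b` satisfy `f₁(a⊗b) = f₁(b⊗a) = 1`, then
`f₁(a⊗a) = f₂(a⊗a) = f₁(b⊗b) = f₂(b⊗b) = 1`, and for any third letter `c`,
`f₁(a⊗c) = f₁(b⊗c) ∈ {0,1}` and `f₁(c⊗a) = f₁(c⊗b) ∈ {0,1}`. -/
theorem weakShuffle_both_one {K X : Type*} [Field K] [CharZero K]
    (B : (List X →₀ K) →ₗ[K] (List X →₀ K) →ₗ[K] (List X →₀ K))
    (f1 f2 : X → X → K)
    (hcomm : ∀ x y, B x y = B y x)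
    (hassoc : ∀ x y z, B (B x y) z = B x (B y z))
    (hunit : ∀ x, B (Finsupp.single [] 1) x = x)
    (hrec : ∀ (a b : X) (u v : List X),
      B (Finsupp.single (a :: u) 1) (Finsupp.single (b :: v) 1) =
        f1 a b • Finsupp.mapDomain (a :: ·)
            (B (Finsupp.single u 1) (Finsupp.single (b :: v) 1)) +
        f2 a b • Finsupp.mapDomain (b :: ·)
            (B (Finsupp.single (a :: u) 1) (Finsupp.single v 1)))
    (a b : X) (hab : a ≠ b) (h1 : f1 a b = 1) (h2 : f1 b a = 1) :
    (f1 a a = 1 ∧ f2 a a = 1 ∧ f1 b b = 1 ∧ f2 b b = 1) ∧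
      ∀ c : X, c ≠ a → c ≠ b →
        (f1 a c = f1 b c ∧ (f1 a c = 0 ∨ f1 a c = 1)) ∧
        (f1 c a = f1 c b ∧ (f1 c a = 0 ∨ f1 c a = 1)) := by
  classical
  have hB0 : ∀ x, B x (Finsupp.single ([] : List X) 1) = x := fun x => by
    rw [hcomm, hunit]
  have hf2 : ∀ x y : X, x ≠ y → f2 x y = f1 y x := by
    intro x y hxy
    have h := hcomm (Finsupp.single [x] 1) (Finsupp.single [y] 1)
    simp only [hrec, hunit, hB0, Finsupp.mapDomain_single] at h
    have h' := DFunLike.congr_fun h [y, x]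
    simpa [Finsupp.single_apply, hxy, hxy.symm] using h'
  have h1' : f2 a b = 1 := by rw [hf2 a b hab, h2]
  have h2' : f2 b a = 1 := by rw [hf2 b a hab.symm, h1]
  -- f1 a a = 1
  have h := hassoc (Finsupp.single [a] 1) (Finsupp.single [a] 1) (Finsupp.single [b] 1)
  simp only [hrec, hunit, hB0, Finsupp.mapDomain_single, Finsupp.mapDomain_add,
    Finsupp.mapDomain_smul, map_add, map_smul, LinearMap.add_apply, LinearMap.smul_apply,
    smul_add, smul_smul] at h
  have e1 := DFunLike.congr_fun h [a,b,a]
  simp [Finsupp.single_apply, hab, hab.symm, h1, h2, h1', h2'] at e1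
  have ha1 : f1 a a = 1 := by linear_combination e1
  -- f2 a a = 1
  have h := hassoc (Finsupp.single [b] 1) (Finsupp.single [a] 1) (Finsupp.single [a] 1)
  simp only [hrec, hunit, hB0, Finsupp.mapDomain_single, Finsupp.mapDomain_add,
    Finsupp.mapDomain_smul, map_add, map_smul, LinearMap.add_apply, LinearMap.smul_apply,
    smul_add, smul_smul] at h
  have e2 := DFunLike.congr_fun h [a,b,a]
  simp [Finsupp.single_apply, hab, hab.symm, h1, h2, h1', h2'] at e2
  have ha2 : f2 a a = 1 := by linear_combination -e2
  -- f1 b b = 1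
  have h := hassoc (Finsupp.single [b] 1) (Finsupp.single [b] 1) (Finsupp.single [a] 1)
  simp only [hrec, hunit, hB0, Finsupp.mapDomain_single, Finsupp.mapDomain_add,
    Finsupp.mapDomain_smul, map_add, map_smul, LinearMap.add_apply, LinearMap.smul_apply,
    smul_add, smul_smul] at h
  have e1b := DFunLike.congr_fun h [b,a,b]
  simp [Finsupp.single_apply, hab, hab.symm, h1, h2, h1', h2'] at e1b
  have hb1 : f1 b b = 1 := by linear_combination e1b
  -- f2 b b = 1
  have h := hassoc (Finsupp.single [a] 1) (Finsupp.single [b] 1) (Finsupp.single [b] 1)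
  simp only [hrec, hunit, hB0, Finsupp.mapDomain_single, Finsupp.mapDomain_add,
    Finsupp.mapDomain_smul, map_add, map_smul, LinearMap.add_apply, LinearMap.smul_apply,
    smul_add, smul_smul] at h
  have e2b := DFunLike.congr_fun h [b,a,b]
  simp [Finsupp.single_apply, hab, hab.symm, h1, h2, h1', h2'] at e2b
  have hb2 : f2 b b = 1 := by linear_combination -e2b
  refine ⟨⟨ha1, ha2, hb1, hb2⟩, fun c hca hcb => ?_⟩
  have hac : f2 a c = f1 c a := hf2 a c hca.symm
  have hca' : f2 c a = f1 a c := hf2 c a hca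
  have hbc : f2 b c = f1 c b := hf2 b c hcb.symm
  have hcb' : f2 c b = f1 b c := hf2 c b hcb
  have h := hassoc (Finsupp.single [a] 1) (Finsupp.single [b] 1) (Finsupp.single [c] 1)
  simp only [hrec, hunit, hB0, Finsupp.mapDomain_single, Finsupp.mapDomain_add,
    Finsupp.mapDomain_smul, map_add, map_smul, LinearMap.add_apply, LinearMap.smul_apply,
    smul_add, smul_smul] at h
  have e3 := DFunLike.congr_fun h [a,b,c]
  simp [Finsupp.single_apply, hab, hab.symm, hca, hca.symm, hcb, hcb.symm,
    h1, h2, h1', h2', hac, hca', hbc, hcb'] at e3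
  have e4 := DFunLike.congr_fun h [c,a,b]
  simp [Finsupp.single_apply, hab, hab.symm, hca, hca.symm, hcb, hcb.symm,
    h1, h2, h1', h2', hac, hca', hbc, hcb'] at e4
  have e5 := DFunLike.congr_fun h [c,b,a]
  simp [Finsupp.single_apply, hab, hab.symm, hca, hca.symm, hcb, hcb.symm,
    h1, h2, h1', h2', hac, hca', hbc, hcb'] at e5
  have h := hassoc (Finsupp.single [b] 1) (Finsupp.single [a] 1) (Finsupp.single [c] 1)
  simp only [hrec, hunit, hB0, Finsupp.mapDomain_single, Finsupp.mapDomain_add,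
    Finsupp.mapDomain_smul, map_add, map_smul, LinearMap.add_apply, LinearMap.smul_apply,
    smul_add, smul_smul] at h
  have e6 := DFunLike.congr_fun h [b,a,c]
  simp [Finsupp.single_apply, hab, hab.symm, hca, hca.symm, hcb, hcb.symm,
    h1, h2, h1', h2', hac, hca', hbc, hcb'] at e6
  have e7 := DFunLike.congr_fun h [c,a,b]
  simp [Finsupp.single_apply, hab, hab.symm, hca, hca.symm, hcb, hcb.symm,
    h1, h2, h1', h2', hac, hca', hbc, hcb'] at e7
  have e8 := DFunLike.congr_fun h [c,b,a]
  simp [Finsupp.single_apply, hab, hab.symm, hca, hca.symm, hcb, hcb.symm,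
    h1, h2, h1', h2', hac, hca', hbc, hcb'] at e8
  -- e3 : f1 a c * f1 b c = f1 b c ; e6 : f1 b c * f1 a c = f1 a c
  have hpr : f1 a c = f1 b c := by linear_combination e3 - e6
  have hp01 : f1 a c = 0 ∨ f1 a c = 1 := by
    rw [← hpr] at e3
    rcases mul_eq_zero.mp (show f1 a c * (f1 a c - 1) = 0 by linear_combination e3) with h | h
    · exact Or.inl h
    · exact Or.inr (by linear_combination h)
  -- e4 : f1 c a = f1 c b * f1 c a ; e5 : f1 c b = f1 c b * f1 c a
  have hqs : f1 c a = f1 c b := by linear_combination e7 - e8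
  have hq01 : f1 c a = 0 ∨ f1 c a = 1 := by
    rw [← hqs] at e4
    rcases mul_eq_zero.mp (show f1 c a * (f1 c a - 1) = 0 by linear_combination -e4) with h | h
    · exact Or.inl h
    · exact Or.inr (by linear_combination h)
  exact ⟨⟨hpr, hp01⟩, ⟨hqs, hq01⟩⟩
end

section
/- For a weak shuffle product ☐ on K⟨X⟩, there exists at most one letter a ∈ X such that f₁(a⊗a) = 1 − f₂(a⊗a) with f₁(a⊗a) ∉ {0,1} or f₂(a⊗a) ≠ f₁(a⊗a); more precisely, if a ≠ b both satisfy f₁(a⊗a) = 1 − f₂(a⊗a) and f₁(b⊗b) = 1 − f₂(b⊗b) (and are not in the symmetric case), a contradiction arises since then f₁(a⊗b) = 1 = f₁(b⊗a) = 0. -/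
/-- For a weak shuffle product, at most one letter can be in the asymmetric case
`f₁(a⊗a) = 1 − f₂(a⊗a)` with `f₁(a⊗a) ≠ f₂(a⊗a)`: two distinct such letters
`a, b` yield a contradiction. -/
theorem weakShuffle_at_most_one_asymmetric {K X : Type*} [Field K] [CharZero K]
    (B : (List X →₀ K) →ₗ[K] (List X →₀ K) →ₗ[K] (List X →₀ K))
    (f1 f2 : X → X → K)
    (hcomm : ∀ x y, B x y = B y x)
    (hassoc : ∀ x y z, B (B x y) z = B x (B y z))
    (hunit : ∀ x, B (Finsupp.single [] 1) x = x)
    (hrec : ∀ (a b : X) (u v : List X),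
      B (Finsupp.single (a :: u) 1) (Finsupp.single (b :: v) 1) =
        f1 a b • Finsupp.mapDomain (a :: ·)
            (B (Finsupp.single u 1) (Finsupp.single (b :: v) 1)) +
        f2 a b • Finsupp.mapDomain (b :: ·)
            (B (Finsupp.single (a :: u) 1) (Finsupp.single v 1)))
    (a b : X) (hab : a ≠ b) :
    ¬ (f1 a a = 1 - f2 a a ∧ f1 a a ≠ f2 a a ∧
         f1 b b = 1 - f2 b b ∧ f1 b b ≠ f2 b b) := by
  classical
  rintro ⟨_, ha2, _, hb2⟩
  have runit : ∀ u : List X,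
      B (Finsupp.single u 1) (Finsupp.single [] 1) = Finsupp.single u 1 :=
    fun u => (hcomm _ _).trans (hunit _)
  -- B [a] [b]
  have hab1 : B (Finsupp.single [a] 1) (Finsupp.single [b] 1) =
      f1 a b • Finsupp.single [a, b] (1 : K) + f2 a b • Finsupp.single [b, a] 1 := by
    rw [hrec a b [] [], hunit, runit, Finsupp.mapDomain_single, Finsupp.mapDomain_single]
  -- B [b] [a]
  have hba1 : B (Finsupp.single [b] 1) (Finsupp.single [a] 1) =
      f1 b a • Finsupp.single [b, a] (1 : K) + f2 b a • Finsupp.single [a, b] 1 := by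
    rw [hrec b a [] [], hunit, runit, Finsupp.mapDomain_single, Finsupp.mapDomain_single]
  -- p = s
  have hps : f1 a b = f2 b a := by
    have h := hcomm (Finsupp.single [a] 1) (Finsupp.single [b] 1)
    rw [hab1, hba1] at h
    have := DFunLike.congr_fun h [a, b]
    simpa [Finsupp.single_apply, hab, hab.symm] using this
  -- B [a] [a,b]
  have hAab : B (Finsupp.single [a] 1) (Finsupp.single [a, b] 1) =
      f1 a a • Finsupp.single [a, a, b] (1 : K) +
        f2 a a • (f1 a b • Finsupp.single [a, a, b] (1 : K) +
          f2 a b • Finsupp.single [a, b, a] 1) := by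
    rw [hrec a a [] [b], hunit, hab1, Finsupp.mapDomain_single, Finsupp.mapDomain_add,
      Finsupp.mapDomain_smul, Finsupp.mapDomain_smul, Finsupp.mapDomain_single,
      Finsupp.mapDomain_single]
  -- B [a,b] [a]
  have hABa : B (Finsupp.single [a, b] 1) (Finsupp.single [a] 1) =
      f1 a a • (f1 b a • Finsupp.single [a, b, a] (1 : K) +
          f2 b a • Finsupp.single [a, a, b] 1) +
        f2 a a • Finsupp.single [a, a, b] (1 : K) := by
    rw [hrec a a [b] [], runit, hba1, Finsupp.mapDomain_single, Finsupp.mapDomain_add,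
      Finsupp.mapDomain_smul, Finsupp.mapDomain_smul, Finsupp.mapDomain_single,
      Finsupp.mapDomain_single]
  -- (α − β)(p − 1) = 0  at word [a,a,b]
  have e1 : f1 a a * f2 b a + f2 a a = f1 a a + f2 a a * f1 a b := by
    have h := hcomm (Finsupp.single [a, b] 1) (Finsupp.single [a] 1)
    rw [hABa, hAab] at h
    have := DFunLike.congr_fun h [a, a, b]
    simpa [Finsupp.single_apply, hab, hab.symm] using this
  -- B [b] [b,a]
  have hBba : B (Finsupp.single [b] 1) (Finsupp.single [b, a] 1) =
      f1 b b • Finsupp.single [b, b, a] (1 : K) +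
        f2 b b • (f1 b a • Finsupp.single [b, b, a] (1 : K) +
          f2 b a • Finsupp.single [b, a, b] 1) := by
    rw [hrec b b [] [a], hunit, hba1, Finsupp.mapDomain_single, Finsupp.mapDomain_add,
      Finsupp.mapDomain_smul, Finsupp.mapDomain_smul, Finsupp.mapDomain_single,
      Finsupp.mapDomain_single]
  -- B [b,a] [b]
  have hBAb : B (Finsupp.single [b, a] 1) (Finsupp.single [b] 1) =
      f1 b b • (f1 a b • Finsupp.single [b, a, b] (1 : K) +
          f2 a b • Finsupp.single [b, b, a] 1) +
        f2 b b • Finsupp.single [b, b, a] (1 : K) := by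
    rw [hrec b b [a] [], runit, hab1, Finsupp.mapDomain_single, Finsupp.mapDomain_add,
      Finsupp.mapDomain_smul, Finsupp.mapDomain_smul, Finsupp.mapDomain_single,
      Finsupp.mapDomain_single]
  -- (α' − β') p = 0  at word [b,a,b]
  have e2 : f1 b b * f1 a b = f2 b b * f2 b a := by
    have h := hcomm (Finsupp.single [b, a] 1) (Finsupp.single [b] 1)
    rw [hBAb, hBba] at h
    have := DFunLike.congr_fun h [b, a, b]
    simpa [Finsupp.single_apply, hab, hab.symm] using this
  -- conclude
  rw [← hps] at e1 e2
  have hp0 : f1 a b = 0 := by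
    have h : (f1 b b - f2 b b) * f1 a b = 0 := by ring_nf; linear_combination e2
    rcases mul_eq_zero.1 h with h' | h'
    · exact absurd (sub_eq_zero.1 h') hb2
    · exact h'
  have : f1 a a - f2 a a = 0 := by
    rw [hp0] at e1
    linear_combination -e1
  exact ha2 (sub_eq_zero.1 this)
end

section
/- Let X = {a, b} and let ☐ be the weak shuffle product with f₁(a⊗b) = 1, f₁(b⊗a) = 0, f₁(a⊗a) = f₂(a⊗a) = 0, f₁(b⊗b) = f₂(b⊗b) = 0 (case C₂ with k = 1). Then for nonempty words u, v: u ☐ v = u·v if u = a^n and v begins with b; u ☐ v = v·u if v = a^n and u begins with b; and u ☐ v = 0 in all other cases. -/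
/-- The weak shuffle product on words over a two-letter alphabet (here `Bool`,
with `a := true` and `b := false`) determined by structure constants
`f₁, f₂ : X → X → K`. -/
noncomputable def wshuffle {K : Type*} [Field K] (f1 f2 : Bool → Bool → K) :
    List Bool → List Bool → (List Bool →₀ K)
  | [], v => Finsupp.single v 1
  | u, [] => Finsupp.single u 1
  | x :: u, y :: v =>
      f1 x y • Finsupp.mapDomain (x :: ·) (wshuffle f1 f2 u (y :: v)) +
      f2 x y • Finsupp.mapDomain (y :: ·) (wshuffle f1 f2 (x :: u) v)
termination_by u v => u.length + v.length
decreasing_by all_goals (simp; try omega)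

private lemma repl_tail {n : ℕ} {u : List Bool} (h : true :: u = List.replicate n true) :
    ∃ m, u = List.replicate m true := by
  cases n with
  | zero => simp at h
  | succ m => exact ⟨m, by simpa [List.replicate_succ] using h⟩

private lemma not_repl_false (v : List Bool) (n : ℕ) :
    false :: v ≠ List.replicate n true := by
  cases n <;> simp [List.replicate_succ]

private lemma aux {K : Type*} [Field K]
    (f1 f2 : Bool → Bool → K)
    (h1 : f1 true false = 1) (h2 : f2 false true = 1)
    (h3 : f1 false true = 0) (h4 : f2 true false = 0)
    (h5 : f1 true true = 0) (h6 : f2 true true = 0)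
    (h7 : f1 false false = 0) (h8 : f2 false false = 0) :
    ∀ N : ℕ, ∀ u v : List Bool, u.length + v.length ≤ N → u ≠ [] → v ≠ [] →
    ((∃ n : ℕ, u = List.replicate n true) → v.head? = some false →
        wshuffle f1 f2 u v = Finsupp.single (u ++ v) 1) ∧
    ((∃ n : ℕ, v = List.replicate n true) → u.head? = some false →
        wshuffle f1 f2 u v = Finsupp.single (v ++ u) 1) ∧
    (¬ ((∃ n : ℕ, u = List.replicate n true) ∧ v.head? = some false) →
     ¬ ((∃ n : ℕ, v = List.replicate n true) ∧ u.head? = some false) →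
        wshuffle f1 f2 u v = 0) := by
  intro N
  induction N with
  | zero =>
    intro u v h hu hv
    cases u with
    | nil => exact absurd rfl hu
    | cons x u' => simp at h
  | succ N ih =>
    rintro (_ | ⟨x, u'⟩) (_ | ⟨y, v'⟩) h hu hv
    · exact absurd rfl hu
    · exact absurd rfl hu
    · exact absurd rfl hv
    have hlen : u'.length + (y :: v').length ≤ N := by simp at h ⊢; omega
    have hlen' : (x :: u').length + v'.length ≤ N := by simp at h ⊢; omega
    cases x <;> cases y
    · -- x = false, y = false
      refine ⟨?_, ?_, ?_⟩
      · rintro ⟨n, hn⟩ _; exact absurd hn (not_repl_false _ _)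
      · rintro ⟨n, hn⟩ _; exact absurd hn (not_repl_false _ _)
      · intro _ _
        rw [wshuffle, h7, h8, zero_smul, zero_smul, add_zero]
    · -- x = false, y = true
      refine ⟨?_, ?_, ?_⟩
      · rintro ⟨n, hn⟩ _; exact absurd hn (not_repl_false _ _)
      · rintro ⟨n, hn⟩ _
        rw [wshuffle, h3, h2, zero_smul, one_smul, zero_add]
        cases v' with
        | nil =>
          rw [wshuffle]
          all_goals simp [Finsupp.mapDomain_single]
        | cons z v'' =>
          obtain ⟨m, hm⟩ := repl_tail hn
          rw [(ih (false :: u') (z :: v'') hlen' (by simp) (by simp)).2.1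
            ⟨m, hm⟩ rfl, Finsupp.mapDomain_single]
          rfl
      · intro hA hB
        have hvr : ∀ n, (true :: v') ≠ List.replicate n true := by
          intro n hn; exact hB ⟨⟨n, hn⟩, rfl⟩
        rw [wshuffle, h3, h2, zero_smul, one_smul, zero_add]
        cases v' with
        | nil => exact absurd (by simp [List.replicate]) (hvr 1)
        | cons z v'' =>
          have hvr' : ∀ m, (z :: v'') ≠ List.replicate m true := fun m hm =>
            hvr (m + 1) (by rw [List.replicate_succ, ← hm])
          rw [(ih (false :: u') (z :: v'') hlen' (by simp) (by simp)).2.2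
            (by rintro ⟨⟨n, hn⟩, _⟩; exact not_repl_false _ _ hn)
            (by rintro ⟨⟨m, hm⟩, _⟩; exact hvr' m hm)]
          simp
    · -- x = true, y = false
      refine ⟨?_, ?_, ?_⟩
      · rintro ⟨n, hn⟩ _
        rw [wshuffle, h1, h4, zero_smul, one_smul, add_zero]
        cases u' with
        | nil =>
          rw [wshuffle]
          all_goals simp [Finsupp.mapDomain_single]
        | cons z u'' =>
          obtain ⟨m, hm⟩ := repl_tail hn
          rw [(ih (z :: u'') (false :: v') hlen (by simp) (by simp)).1
            ⟨m, hm⟩ rfl, Finsupp.mapDomain_single]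
          rfl
      · rintro ⟨n, hn⟩ _; exact absurd hn (not_repl_false _ _)
      · intro hA hB
        have hur : ∀ n, (true :: u') ≠ List.replicate n true := by
          intro n hn; exact hA ⟨⟨n, hn⟩, rfl⟩
        rw [wshuffle, h1, h4, zero_smul, one_smul, add_zero]
        cases u' with
        | nil => exact absurd (by simp [List.replicate]) (hur 1)
        | cons z u'' =>
          have hur' : ∀ m, (z :: u'') ≠ List.replicate m true := fun m hm =>
            hur (m + 1) (by rw [List.replicate_succ, ← hm])
          rw [(ih (z :: u'') (false :: v') hlen (by simp) (by simp)).2.2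
            (by rintro ⟨⟨m, hm⟩, _⟩; exact hur' m hm)
            (by rintro ⟨⟨n, hn⟩, _⟩; exact not_repl_false _ _ hn)]
          simp
    · -- x = true, y = true
      refine ⟨?_, ?_, ?_⟩
      · intro _ hhead; simp at hhead
      · intro _ hhead; simp at hhead
      · intro _ _
        rw [wshuffle, h5, h6, zero_smul, zero_smul, add_zero]

/-- Case `C₂` (with `k = 1`) on `X = {a, b}` (`a := true`, `b := false`):
`f₁(a⊗b) = 1` and all other structure constants vanish.  For nonempty words
`u, v`: `u ☐ v = u·v` if `u = a^n` and `v` begins with `b`; `u ☐ v = v·u` if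
`v = a^n` and `u` begins with `b`; and `u ☐ v = 0` otherwise. -/
theorem wshuffle_C2_description {K : Type*} [Field K] [CharZero K]
    (f1 f2 : Bool → Bool → K)
    (h1 : f1 true false = 1) (h2 : f2 false true = 1)
    (h3 : f1 false true = 0) (h4 : f2 true false = 0)
    (h5 : f1 true true = 0) (h6 : f2 true true = 0)
    (h7 : f1 false false = 0) (h8 : f2 false false = 0)
    (u v : List Bool) (hu : u ≠ []) (hv : v ≠ []) :
    ((∃ n : ℕ, u = List.replicate n true) → v.head? = some false →
        wshuffle f1 f2 u v = Finsupp.single (u ++ v) 1) ∧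
    ((∃ n : ℕ, v = List.replicate n true) → u.head? = some false →
        wshuffle f1 f2 u v = Finsupp.single (v ++ u) 1) ∧
    (¬ ((∃ n : ℕ, u = List.replicate n true) ∧ v.head? = some false) →
     ¬ ((∃ n : ℕ, v = List.replicate n true) ∧ u.head? = some false) →
        wshuffle f1 f2 u v = 0) :=
  aux f1 f2 h1 h2 h3 h4 h5 h6 h7 h8 (u.length + v.length) u v le_rfl hu hv
end

section
/- Let ☐ be a weak shuffle product on K⟨X⟩ such that f₁(a⊗a) ∈ {0,1} for every letter a. Define au ≺ bv = f₁(a⊗b)·a·(u ☐ bv) and au ≻ bv = f₂(a⊗b)·b·(au ☐ v). Then (K⟨X⟩, ≺, ≻) is a dendriform algebra: for all x, y, z in the augmentation ideal, (x ≺ y) ≺ z = x ≺ (y ≺ z + y ≻ z), (x ≻ y) ≺ z = x ≻ (y ≺ z), and (x ≺ y + x ≻ y) ≻ z = x ≻ (y ≻ z). -/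
/-- The left half-product `≺` of a weak shuffle product `B` with structure
constant `f₁`: `au ≺ bv = f₁(a⊗b)·a·(u ☐ bv)` (and `0` if an argument is the
empty word). -/
noncomputable def precP {K X : Type*} [Field K]
    (B : (List X →₀ K) →ₗ[K] (List X →₀ K) →ₗ[K] (List X →₀ K))
    (f1 : X → X → K) : List X → List X → (List X →₀ K)
  | a :: u, b :: v =>
      f1 a b • Finsupp.mapDomain (a :: ·)
        (B (Finsupp.single u 1) (Finsupp.single (b :: v) 1))
  | _, _ => 0

/-- The right half-product `≻` of a weak shuffle product `B` with structure
constant `f₂`: `au ≻ bv = f₂(a⊗b)·b·(au ☐ v)`. -/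
noncomputable def succP {K X : Type*} [Field K]
    (B : (List X →₀ K) →ₗ[K] (List X →₀ K) →ₗ[K] (List X →₀ K))
    (f2 : X → X → K) : List X → List X → (List X →₀ K)
  | a :: u, b :: v =>
      f2 a b • Finsupp.mapDomain (b :: ·)
        (B (Finsupp.single (a :: u) 1) (Finsupp.single v 1))
  | _, _ => 0

section Aux

variable {K X : Type*} [Field K]

private lemma sum_linmap (Φ : (List X →₀ K) →ₗ[K] (List X →₀ K)) (y : List X →₀ K)
    (g : List X → (List X →₀ K)) (h : ∀ s, g s = Φ (Finsupp.single s 1)) :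
    y.sum (fun t c => c • g t) = Φ y := by
  conv_rhs => rw [← Finsupp.sum_single y]
  rw [map_finsuppSum]
  refine Finsupp.sum_congr fun t _ => ?_
  rw [h, ← map_smul, Finsupp.smul_single, smul_eq_mul, mul_one]

private lemma sum_mapDomain_linmap (a : X) (Φ : (List X →₀ K) →ₗ[K] (List X →₀ K))
    (y : List X →₀ K) (g : List X → (List X →₀ K))
    (h : ∀ s, g (a :: s) = Φ (Finsupp.single s 1)) :
    (Finsupp.mapDomain (a :: ·) y).sum (fun t c => c • g t) = Φ y := by
  rw [Finsupp.sum_mapDomain_index_inj (List.cons_injective)]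
  exact sum_linmap Φ y (fun s => g (a :: s)) h

variable (B : (List X →₀ K) →ₗ[K] (List X →₀ K) →ₗ[K] (List X →₀ K)) (f1 f2 : X → X → K)

private lemma sumS1 (a c : X) (w' : List X) (y : List X →₀ K) :
    (Finsupp.mapDomain (a :: ·) y).sum (fun t k => k • precP B f1 t (c :: w')) =
      f1 a c • Finsupp.mapDomain (a :: ·) (B y (Finsupp.single (c :: w') 1)) := by
  rw [sum_mapDomain_linmap a
    (f1 a c • (Finsupp.lmapDomain K K (a :: ·)).comp (B.flip (Finsupp.single (c :: w') 1))) y _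
    (fun s => by simp [precP, Finsupp.lmapDomain_apply])]
  simp [Finsupp.lmapDomain_apply]

private lemma sumS2 (a c : X) (w' : List X) (y : List X →₀ K) :
    (Finsupp.mapDomain (a :: ·) y).sum (fun t k => k • succP B f2 t (c :: w')) =
      f2 a c • Finsupp.mapDomain (c :: ·)
        (B (Finsupp.mapDomain (a :: ·) y) (Finsupp.single w' 1)) := by
  rw [sum_mapDomain_linmap a
    (f2 a c • (Finsupp.lmapDomain K K (c :: ·)).comp
      ((B.flip (Finsupp.single w' 1)).comp (Finsupp.lmapDomain K K (a :: ·)))) y _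
    (fun s => by simp [succP, Finsupp.lmapDomain_apply, Finsupp.mapDomain_single])]
  simp [Finsupp.lmapDomain_apply]

private lemma sumS3 (a d : X) (u' : List X) (y : List X →₀ K) :
    (Finsupp.mapDomain (d :: ·) y).sum (fun t k => k • precP B f1 (a :: u') t) =
      f1 a d • Finsupp.mapDomain (a :: ·)
        (B (Finsupp.single u' 1) (Finsupp.mapDomain (d :: ·) y)) := by
  rw [sum_mapDomain_linmap d
    (f1 a d • (Finsupp.lmapDomain K K (a :: ·)).comp
      ((B (Finsupp.single u' 1)).comp (Finsupp.lmapDomain K K (d :: ·)))) y _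
    (fun s => by simp [precP, Finsupp.lmapDomain_apply, Finsupp.mapDomain_single])]
  simp [Finsupp.lmapDomain_apply]

private lemma sumS4 (a d : X) (u' : List X) (y : List X →₀ K) :
    (Finsupp.mapDomain (d :: ·) y).sum (fun t k => k • succP B f2 (a :: u') t) =
      f2 a d • Finsupp.mapDomain (d :: ·) (B (Finsupp.single (a :: u') 1) y) := by
  rw [sum_mapDomain_linmap d
    (f2 a d • (Finsupp.lmapDomain K K (d :: ·)).comp (B (Finsupp.single (a :: u') 1))) y _
    (fun s => by simp [succP, Finsupp.lmapDomain_apply])]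
  simp [Finsupp.lmapDomain_apply]

variable
    (hcomm : ∀ x y, B x y = B y x)
    (hassoc : ∀ x y z, B (B x y) z = B x (B y z))
    (hunit : ∀ x, B (Finsupp.single [] 1) x = x)
    (hrec : ∀ (a b : X) (u v : List X),
      B (Finsupp.single (a :: u) 1) (Finsupp.single (b :: v) 1) =
        f1 a b • Finsupp.mapDomain (a :: ·)
            (B (Finsupp.single u 1) (Finsupp.single (b :: v) 1)) +
        f2 a b • Finsupp.mapDomain (b :: ·)
            (B (Finsupp.single (a :: u) 1) (Finsupp.single v 1)))

section Rec
include hrec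

private lemma BML (x c : X) (w' : List X) (y : List X →₀ K) :
    B (Finsupp.mapDomain (x :: ·) y) (Finsupp.single (c :: w') 1) =
      f1 x c • Finsupp.mapDomain (x :: ·) (B y (Finsupp.single (c :: w') 1)) +
      f2 x c • Finsupp.mapDomain (c :: ·)
        (B (Finsupp.mapDomain (x :: ·) y) (Finsupp.single w' 1)) := by
  induction y using Finsupp.induction_linear with
  | zero => simp
  | add f g hf hg =>
      simp only [Finsupp.mapDomain_add, map_add, LinearMap.add_apply, smul_add, hf, hg]
      abel
  | single s k =>
      have h1 : (Finsupp.single s k : List X →₀ K) = k • Finsupp.single s 1 := by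
        rw [Finsupp.smul_single, smul_eq_mul, mul_one]
      rw [h1, Finsupp.mapDomain_smul, map_smul, LinearMap.smul_apply, Finsupp.mapDomain_single,
        hrec x c s w']
      simp only [map_smul, LinearMap.smul_apply, Finsupp.mapDomain_smul, smul_add,
        smul_comm k (f1 x c), smul_comm k (f2 x c)]

private lemma BMR (a x : X) (u' : List X) (y : List X →₀ K) :
    B (Finsupp.single (a :: u') 1) (Finsupp.mapDomain (x :: ·) y) =
      f1 a x • Finsupp.mapDomain (a :: ·)
        (B (Finsupp.single u' 1) (Finsupp.mapDomain (x :: ·) y)) +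
      f2 a x • Finsupp.mapDomain (x :: ·) (B (Finsupp.single (a :: u') 1) y) := by
  induction y using Finsupp.induction_linear with
  | zero => simp
  | add f g hf hg =>
      simp only [Finsupp.mapDomain_add, map_add, smul_add, hf, hg]
      abel
  | single s k =>
      have h1 : (Finsupp.single s k : List X →₀ K) = k • Finsupp.single s 1 := by
        rw [Finsupp.smul_single, smul_eq_mul, mul_one]
      rw [h1, Finsupp.mapDomain_smul, map_smul, Finsupp.mapDomain_single,
        hrec a x u' s]
      simp only [map_smul, LinearMap.smul_apply, Finsupp.mapDomain_smul, smul_add,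
        smul_comm k (f1 a x), smul_comm k (f2 a x)]

include hassoc

private lemma E_eq (a b c : X) (u' v' w' : List X) :
    (f1 b c * (f1 a b * (f1 a c - 1))) • Finsupp.mapDomain (a :: ·)
        (B (Finsupp.single u' 1) (Finsupp.mapDomain (b :: ·)
          (B (Finsupp.single v' 1) (Finsupp.single (c :: w') 1)))) +
    (f2 b c * (f1 a c * (f1 a b - 1))) • Finsupp.mapDomain (a :: ·)
        (B (Finsupp.single u' 1) (Finsupp.mapDomain (c :: ·)
          (B (Finsupp.single (b :: v') 1) (Finsupp.single w' 1)))) =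
    (f1 a b * (f2 a c * (f2 b c - 1))) • Finsupp.mapDomain (c :: ·)
        (B (Finsupp.mapDomain (a :: ·)
          (B (Finsupp.single u' 1) (Finsupp.single (b :: v') 1))) (Finsupp.single w' 1)) +
    (f2 a b * (f2 b c * (f2 a c - 1))) • Finsupp.mapDomain (c :: ·)
        (B (Finsupp.mapDomain (b :: ·)
          (B (Finsupp.single (a :: u') 1) (Finsupp.single v' 1))) (Finsupp.single w' 1)) := by
  have h := hassoc (Finsupp.single (a :: u') 1) (Finsupp.single (b :: v') 1)
    (Finsupp.single (c :: w') 1)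
  rw [hrec a b u' v', hrec b c v' w'] at h
  rw [map_add, map_smul, map_smul, LinearMap.add_apply, LinearMap.smul_apply,
    LinearMap.smul_apply] at h
  rw [map_add, map_smul, map_smul] at h
  rw [BML B f1 f2 hrec a c w', BML B f1 f2 hrec b c w'] at h
  rw [BMR B f1 f2 hrec a b u', BMR B f1 f2 hrec a c u'] at h
  have hT : B (B (Finsupp.single u' 1) (Finsupp.single (b :: v') 1))
      (Finsupp.single (c :: w') 1) =
      f1 b c • B (Finsupp.single u' 1) (Finsupp.mapDomain (b :: ·)
        (B (Finsupp.single v' 1) (Finsupp.single (c :: w') 1))) +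
      f2 b c • B (Finsupp.single u' 1) (Finsupp.mapDomain (c :: ·)
        (B (Finsupp.single (b :: v') 1) (Finsupp.single w' 1))) := by
    rw [hassoc, hrec b c v' w', map_add, map_smul, map_smul]
  have hW : B (Finsupp.single (a :: u') 1)
      (B (Finsupp.single (b :: v') 1) (Finsupp.single w' 1)) =
      f1 a b • B (Finsupp.mapDomain (a :: ·)
        (B (Finsupp.single u' 1) (Finsupp.single (b :: v') 1))) (Finsupp.single w' 1) +
      f2 a b • B (Finsupp.mapDomain (b :: ·)
        (B (Finsupp.single (a :: u') 1) (Finsupp.single v' 1))) (Finsupp.single w' 1) := by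
    rw [← hassoc, hrec a b u' v', map_add, LinearMap.add_apply, map_smul, map_smul,
      LinearMap.smul_apply, LinearMap.smul_apply]
  have hU : B (B (Finsupp.single (a :: u') 1) (Finsupp.single v' 1))
      (Finsupp.single (c :: w') 1) =
      B (Finsupp.single (a :: u') 1)
        (B (Finsupp.single v' 1) (Finsupp.single (c :: w') 1)) := hassoc _ _ _
  rw [hT, hU, hW] at h
  simp only [Finsupp.mapDomain_add, Finsupp.mapDomain_smul, smul_add, smul_smul] at h ⊢
  linear_combination (norm := module) h

private lemma key1 (a b c : X) (hac : a ≠ c) (u' v' w' : List X) :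
    ((f1 b c * (f1 a b * (f1 a c - 1))) •
        (B (Finsupp.single u' 1) (Finsupp.mapDomain (b :: ·)
          (B (Finsupp.single v' 1) (Finsupp.single (c :: w') 1)))) +
      (f2 b c * (f1 a c * (f1 a b - 1))) •
        (B (Finsupp.single u' 1) (Finsupp.mapDomain (c :: ·)
          (B (Finsupp.single (b :: v') 1) (Finsupp.single w' 1)))) = 0) ∧
    ((f1 a b * (f2 a c * (f2 b c - 1))) •
        (B (Finsupp.mapDomain (a :: ·)
          (B (Finsupp.single u' 1) (Finsupp.single (b :: v') 1))) (Finsupp.single w' 1)) +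
      (f2 a b * (f2 b c * (f2 a c - 1))) •
        (B (Finsupp.mapDomain (b :: ·)
          (B (Finsupp.single (a :: u') 1) (Finsupp.single v' 1))) (Finsupp.single w' 1)) = 0) := by
  have h := E_eq B f1 f2 hassoc hrec a b c u' v' w'
  have hra : ∀ (z : List X →₀ K) (s : List X),
      Finsupp.mapDomain (c :: ·) z (a :: s) = 0 := fun z s =>
    Finsupp.mapDomain_notin_range z _
      (by rintro ⟨t, ht⟩; exact hac (List.head_eq_of_cons_eq ht).symm)
  have hrc : ∀ (z : List X →₀ K) (s : List X),
      Finsupp.mapDomain (a :: ·) z (c :: s) = 0 := fun z s =>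
    Finsupp.mapDomain_notin_range z _
      (by rintro ⟨t, ht⟩; exact hac (List.head_eq_of_cons_eq ht))
  constructor
  · ext s
    have h2 := DFunLike.congr_fun h (a :: s)
    simpa [Finsupp.mapDomain_apply List.cons_injective, hra] using h2
  · ext s
    have h2 := DFunLike.congr_fun h (c :: s)
    simpa [Finsupp.mapDomain_apply List.cons_injective, hrc] using h2.symm

include hcomm hunit

omit hassoc in
private lemma commPair (a b : X) (hab : a ≠ b) : f2 b a = f1 a b ∧ f1 b a = f2 a b := by
  have h0 : ∀ t : List X, B (Finsupp.single t 1) (Finsupp.single [] 1) = Finsupp.single t 1 :=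
    fun t => by rw [hcomm, hunit]
  have e1 : B (Finsupp.single [a] 1) (Finsupp.single [b] 1) =
      f1 a b • Finsupp.single [a, b] 1 + f2 a b • Finsupp.single [b, a] 1 := by
    rw [hrec a b [] [], hunit, h0, Finsupp.mapDomain_single, Finsupp.mapDomain_single]
  have e2 : B (Finsupp.single [b] 1) (Finsupp.single [a] 1) =
      f1 b a • Finsupp.single [b, a] 1 + f2 b a • Finsupp.single [a, b] 1 := by
    rw [hrec b a [] [], hunit, h0, Finsupp.mapDomain_single, Finsupp.mapDomain_single]
  have h := hcomm (Finsupp.single [a] 1) (Finsupp.single [b] 1)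
  rw [e1, e2] at h
  constructor
  · have h2 := DFunLike.congr_fun h [a, b]
    simpa [Finsupp.single_apply, List.cons.injEq, hab, hab.symm] using h2.symm
  · have h2 := DFunLike.congr_fun h [b, a]
    simpa [Finsupp.single_apply, List.cons.injEq, hab, hab.symm] using h2.symm

private lemma rels (a b : X) (hab : a ≠ b) :
    f1 a b * (f1 a a * (f1 a b - 1)) = 0 ∧ f2 a b * (f1 a b * (f1 a a - 1)) = 0 := by
  have h0 : ∀ t : List X, B (Finsupp.single t 1) (Finsupp.single [] 1) = Finsupp.single t 1 :=
    fun t => by rw [hcomm, hunit]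
  have hk := (key1 B f1 f2 hassoc hrec a a b hab [] [] []).1
  simp only [hunit, h0, Finsupp.mapDomain_single] at hk
  constructor
  · have h2 := DFunLike.congr_fun hk [a, b]
    simpa [Finsupp.single_apply, List.cons.injEq, hab, hab.symm] using h2
  · have h2 := DFunLike.congr_fun hk [b, a]
    simpa [Finsupp.single_apply, List.cons.injEq, hab, hab.symm] using h2

private lemma key (hdiag : ∀ a : X, f1 a a = 0 ∨ f1 a a = 1)
    (a b c : X) (u' v' w' : List X) :
    ((f1 b c * (f1 a b * (f1 a c - 1))) •
        (B (Finsupp.single u' 1) (Finsupp.mapDomain (b :: ·)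
          (B (Finsupp.single v' 1) (Finsupp.single (c :: w') 1)))) +
      (f2 b c * (f1 a c * (f1 a b - 1))) •
        (B (Finsupp.single u' 1) (Finsupp.mapDomain (c :: ·)
          (B (Finsupp.single (b :: v') 1) (Finsupp.single w' 1)))) = 0) ∧
    ((f1 a b * (f2 a c * (f2 b c - 1))) •
        (B (Finsupp.mapDomain (a :: ·)
          (B (Finsupp.single u' 1) (Finsupp.single (b :: v') 1))) (Finsupp.single w' 1)) +
      (f2 a b * (f2 b c * (f2 a c - 1))) •
        (B (Finsupp.mapDomain (b :: ·)
          (B (Finsupp.single (a :: u') 1) (Finsupp.single v' 1))) (Finsupp.single w' 1)) = 0) := by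
  rcases eq_or_ne a c with rfl | hac
  · -- a = c
    have hα : f1 b a * (f1 a b * (f1 a a - 1)) = 0 := by
      rcases eq_or_ne b a with rfl | hba
      · rcases hdiag b with h | h <;> rw [h] <;> ring
      · have hc := commPair B f1 f2 hcomm hunit hrec a b (Ne.symm hba)
        have hr := (rels B f1 f2 hcomm hassoc hunit hrec a b (Ne.symm hba)).2
        rw [hc.2]
        linear_combination hr
    have hβ : f2 b a * (f1 a a * (f1 a b - 1)) = 0 := by
      rcases eq_or_ne b a with rfl | hba
      · rcases hdiag b with h | h <;> rw [h] <;> ring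
      · have hc := commPair B f1 f2 hcomm hunit hrec a b (Ne.symm hba)
        have hr := (rels B f1 f2 hcomm hassoc hunit hrec a b (Ne.symm hba)).1
        rw [hc.1]
        linear_combination hr
    constructor
    · rw [hα, hβ, zero_smul, zero_smul, add_zero]
    · have h := E_eq B f1 f2 hassoc hrec a b a u' v' w'
      rw [hα, hβ, zero_smul, zero_smul, add_zero] at h
      have h2 : Finsupp.mapDomain (a :: ·)
          ((f1 a b * (f2 a a * (f2 b a - 1))) •
            (B (Finsupp.mapDomain (a :: ·)
              (B (Finsupp.single u' 1) (Finsupp.single (b :: v') 1))) (Finsupp.single w' 1)) +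
          (f2 a b * (f2 b a * (f2 a a - 1))) •
            (B (Finsupp.mapDomain (b :: ·)
              (B (Finsupp.single (a :: u') 1) (Finsupp.single v' 1))) (Finsupp.single w' 1))) =
          Finsupp.mapDomain (a :: ·) (0 : List X →₀ K) := by
        rw [Finsupp.mapDomain_zero, Finsupp.mapDomain_add, Finsupp.mapDomain_smul,
          Finsupp.mapDomain_smul, ← h]
      exact Finsupp.mapDomain_injective List.cons_injective h2
  · exact key1 B f1 f2 hassoc hrec a b c hac u' v' w'

end Rec
end Aux

/-- If `☐` is a weak shuffle product with `f₁(a⊗a) ∈ {0,1}` for every letter,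
then the half-products `≺, ≻` make `K⟨X⟩` (on nonempty words) into a
dendriform algebra. -/
theorem weakShuffle_dendriform {K X : Type*} [Field K] [CharZero K]
    (B : (List X →₀ K) →ₗ[K] (List X →₀ K) →ₗ[K] (List X →₀ K))
    (f1 f2 : X → X → K)
    (hcomm : ∀ x y, B x y = B y x)
    (hassoc : ∀ x y z, B (B x y) z = B x (B y z))
    (hunit : ∀ x, B (Finsupp.single [] 1) x = x)
    (hrec : ∀ (a b : X) (u v : List X),
      B (Finsupp.single (a :: u) 1) (Finsupp.single (b :: v) 1) =
        f1 a b • Finsupp.mapDomain (a :: ·)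
            (B (Finsupp.single u 1) (Finsupp.single (b :: v) 1)) +
        f2 a b • Finsupp.mapDomain (b :: ·)
            (B (Finsupp.single (a :: u) 1) (Finsupp.single v 1)))
    (hdiag : ∀ a : X, f1 a a = 0 ∨ f1 a a = 1)
    (u v w : List X) (hu : u ≠ []) (hv : v ≠ []) (hw : w ≠ []) :
    ((precP B f1 u v).sum (fun t c => c • precP B f1 t w) =
        (precP B f1 v w + succP B f2 v w).sum (fun t c => c • precP B f1 u t)) ∧
    ((succP B f2 u v).sum (fun t c => c • precP B f1 t w) =
        (precP B f1 v w).sum (fun t c => c • succP B f2 u t)) ∧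
    ((precP B f1 u v + succP B f2 u v).sum (fun t c => c • succP B f2 t w) =
        (succP B f2 v w).sum (fun t c => c • succP B f2 u t)) := by
  obtain ⟨a, u', rfl⟩ := List.exists_cons_of_ne_nil hu
  obtain ⟨b, v', rfl⟩ := List.exists_cons_of_ne_nil hv
  obtain ⟨c, w', rfl⟩ := List.exists_cons_of_ne_nil hw
  have hkey := key B f1 f2 hcomm hassoc hunit hrec hdiag a b c u' v' w'
  have hP : precP B f1 (a :: u') (b :: v') = Finsupp.mapDomain (a :: ·)
      (f1 a b • (B (Finsupp.single u' 1) (Finsupp.single (b :: v') 1))) := by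
    rw [Finsupp.mapDomain_smul]; rfl
  have hS : succP B f2 (a :: u') (b :: v') = Finsupp.mapDomain (b :: ·)
      (f2 a b • (B (Finsupp.single (a :: u') 1) (Finsupp.single v' 1))) := by
    rw [Finsupp.mapDomain_smul]; rfl
  have hPvw : precP B f1 (b :: v') (c :: w') = Finsupp.mapDomain (b :: ·)
      (f1 b c • (B (Finsupp.single v' 1) (Finsupp.single (c :: w') 1))) := by
    rw [Finsupp.mapDomain_smul]; rfl
  have hSvw : succP B f2 (b :: v') (c :: w') = Finsupp.mapDomain (c :: ·)
      (f2 b c • (B (Finsupp.single (b :: v') 1) (Finsupp.single w' 1))) := by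
    rw [Finsupp.mapDomain_smul]; rfl
  refine ⟨?_, ?_, ?_⟩
  · -- axiom 1
    rw [hP, sumS1 B f1 a c w']
    rw [Finsupp.sum_add_index' (h := fun t k => k • precP B f1 (a :: u') t)
      (fun _ => zero_smul K _) (fun _ b1 b2 => add_smul b1 b2 _)]
    rw [hPvw, sumS3 B f1 a b u', hSvw, sumS3 B f1 a c u']
    have hT : B (B (Finsupp.single u' 1) (Finsupp.single (b :: v') 1))
        (Finsupp.single (c :: w') 1) =
        f1 b c • B (Finsupp.single u' 1) (Finsupp.mapDomain (b :: ·)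
          (B (Finsupp.single v' 1) (Finsupp.single (c :: w') 1))) +
        f2 b c • B (Finsupp.single u' 1) (Finsupp.mapDomain (c :: ·)
          (B (Finsupp.single (b :: v') 1) (Finsupp.single w' 1))) := by
      rw [hassoc, hrec b c v' w', map_add, map_smul, map_smul]
    simp only [map_smul, LinearMap.smul_apply, Finsupp.mapDomain_smul, smul_smul]
    rw [hT]
    simp only [Finsupp.mapDomain_add, Finsupp.mapDomain_smul, smul_add, smul_smul]
    have hkm := congrArg (Finsupp.mapDomain (a :: ·)) hkey.1
    simp only [Finsupp.mapDomain_add, Finsupp.mapDomain_smul, Finsupp.mapDomain_zero] at hkm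
    linear_combination (norm := module) hkm
  · -- axiom 2
    rw [hS, sumS1 B f1 b c w', hPvw, sumS4 B f2 a b u']
    simp only [map_smul, LinearMap.smul_apply, Finsupp.mapDomain_smul, smul_smul]
    rw [hassoc, mul_comm (f1 b c) (f2 a b)]
  · -- axiom 3
    rw [Finsupp.sum_add_index' (h := fun t k => k • succP B f2 t (c :: w'))
      (fun _ => zero_smul K _) (fun _ b1 b2 => add_smul b1 b2 _)]
    rw [hP, sumS2 B f2 a c w', hS, sumS2 B f2 b c w', hSvw, sumS4 B f2 a c u']
    have hW : B (Finsupp.single (a :: u') 1)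
        (B (Finsupp.single (b :: v') 1) (Finsupp.single w' 1)) =
        f1 a b • B (Finsupp.mapDomain (a :: ·)
          (B (Finsupp.single u' 1) (Finsupp.single (b :: v') 1))) (Finsupp.single w' 1) +
        f2 a b • B (Finsupp.mapDomain (b :: ·)
          (B (Finsupp.single (a :: u') 1) (Finsupp.single v' 1))) (Finsupp.single w' 1) := by
      rw [← hassoc, hrec a b u' v', map_add, LinearMap.add_apply, map_smul, map_smul,
        LinearMap.smul_apply, LinearMap.smul_apply]
    simp only [map_smul, LinearMap.smul_apply, Finsupp.mapDomain_smul, smul_smul]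
    rw [hW]
    simp only [Finsupp.mapDomain_add, Finsupp.mapDomain_smul, smul_add, smul_smul]
    have hkm := congrArg (Finsupp.mapDomain (c :: ·)) hkey.2
    simp only [Finsupp.mapDomain_add, Finsupp.mapDomain_smul, Finsupp.mapDomain_zero] at hkm
    linear_combination (norm := module) (-hkm)
end

section
/- Let ☐ be a weak stuffle product on K⟨X⟩, i.e. an associative commutative bilinear product with (a·u) ☐ (b·v) = f₁(a⊗b)·a·(u ☐ (b·v)) + f₂(a⊗b)·b·((a·u) ☐ v) + f₃(a⊗b)·(u ☐ v), where f₃ : K·X ⊗ K·X → K·X. Then f₃ is commutative and associative: f₃(x⊗y) = f₃(y⊗x) and f₃(f₃(x⊗y)⊗z) = f₃(x⊗f₃(y⊗z)) for all letters x, y, z. -/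
/-- For a weak stuffle product with contracting part `f₃ : K·X ⊗ K·X → K·X`, the
map `f₃` is commutative and associative. -/
theorem weakStuffle_f3_comm_assoc {K X : Type*} [Field K] [CharZero K] [Countable X]
    (B : (List X →₀ K) →ₗ[K] (List X →₀ K) →ₗ[K] (List X →₀ K))
    (f1 f2 : X → X → K) (f3 : X → X → (X →₀ K))
    (hcomm : ∀ x y, B x y = B y x)
    (hassoc : ∀ x y z, B (B x y) z = B x (B y z))
    (hunit : ∀ x, B (Finsupp.single [] 1) x = x)
    (hrec : ∀ (a b : X) (u v : List X),
      B (Finsupp.single (a :: u) 1) (Finsupp.single (b :: v) 1) =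
        f1 a b • Finsupp.mapDomain (a :: ·)
            (B (Finsupp.single u 1) (Finsupp.single (b :: v) 1)) +
        f2 a b • Finsupp.mapDomain (b :: ·)
            (B (Finsupp.single (a :: u) 1) (Finsupp.single v 1)) +
        (f3 a b).sum (fun x c => c • Finsupp.mapDomain (x :: ·)
            (B (Finsupp.single u 1) (Finsupp.single v 1))))
 :
    (∀ x y : X, f3 x y = f3 y x) ∧
    (∀ x y z : X,
      (f3 x y).sum (fun t c => c • f3 t z) =
        (f3 y z).sum (fun t c => c • f3 x t)) := by
    classical
  -- evaluating mapDomain (a :: ·) at singleton lists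
  have hinj : ∀ a : X, Function.Injective ((a :: ·) : List X → List X) :=
    fun a l1 l2 h => by simpa using h
  have Ma : ∀ (a : X) (g : List X →₀ K),
      (Finsupp.mapDomain (a :: ·) g) [a] = g [] :=
    fun a g => Finsupp.mapDomain_apply (hinj a) g []
  have Mn : ∀ (a w : X) (g : List X →₀ K), w ≠ a →
      (Finsupp.mapDomain (a :: ·) g) [w] = 0 := by
    intro a w g h
    rw [Finsupp.mapDomain_notin_range]
    rintro ⟨l, hl⟩
    simp only [List.cons.injEq] at hl
    exact h hl.1.symm
  -- evaluating the "letter sum" at a singleton list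
  have evS : ∀ (g : X →₀ K) (w : X),
      (g.sum fun t c => c • Finsupp.single [t] (1 : K)) [w] = g w := by
    intro g w
    rw [Finsupp.sum_apply]
    simp only [Finsupp.smul_apply, Finsupp.single_apply, smul_eq_mul]
    simp only [List.cons.injEq, and_true, mul_ite, mul_one, mul_zero]
    rw [show (fun (t : X) (c : K) => if t = w then c else 0)
        = fun t c => if w = t then c else 0 by funext t c; simp [eq_comm]]
    rw [Finsupp.sum_ite_eq g w fun _ c => c]
    simp only [Finsupp.mem_support_iff, ne_eq, ite_not, ite_eq_right_iff]
    exact fun h => h.symm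
  -- the basic letter-letter product formula
  have B1 : ∀ x y : X, B (Finsupp.single [x] 1) (Finsupp.single [y] 1) =
      f1 x y • Finsupp.single [x, y] 1 + f2 x y • Finsupp.single [y, x] 1 +
      (f3 x y).sum (fun t c => c • Finsupp.single [t] 1) := by
    intro x y
    have h := hrec x y [] []
    rw [hcomm (Finsupp.single [x] 1) (Finsupp.single [] 1)] at h
    simp only [hunit, Finsupp.mapDomain_single] at h
    exact h
  have Bt : ∀ t z w : X,
      (B (Finsupp.single [t] 1) (Finsupp.single [z] 1)) [w] = f3 t z w := by
    intro t z w
    rw [B1, Finsupp.add_apply, Finsupp.add_apply, Finsupp.smul_apply,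
      Finsupp.smul_apply, evS]
    simp [Finsupp.single_apply]
  have Bnil : ∀ t z : X,
      (B (Finsupp.single [t] 1) (Finsupp.single [z] 1)) [] = 0 := by
    intro t z
    rw [B1, Finsupp.add_apply, Finsupp.add_apply, Finsupp.sum_apply]
    simp [Finsupp.single_apply]
  -- commutativity of f3
  have hc : ∀ x y : X, f3 x y = f3 y x := by
    intro x y
    ext w
    rw [← Bt x y w, ← Bt y x w, hcomm]
  -- products of a two-letter word with a letter have no singleton component
  have L2 : ∀ a b z w : X,
      (B (Finsupp.single [a, b] 1) (Finsupp.single [z] 1)) [w] = 0 := by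
    intro a b z w
    have h := hrec a z [b] []
    rw [hcomm (Finsupp.single [a, b] 1) (Finsupp.single [] 1)] at h
    rw [hcomm (Finsupp.single [b] 1) (Finsupp.single [] 1)] at h
    simp only [hunit] at h
    have t1 : (Finsupp.mapDomain (a :: ·)
        (B (Finsupp.single [b] 1) (Finsupp.single [z] 1))) [w] = 0 := by
      by_cases hw : w = a
      · subst hw; rw [Ma]; exact Bnil b z
      · exact Mn _ _ _ hw
    have t2 : (Finsupp.mapDomain (z :: ·)
        ((Finsupp.single [a, b] 1 : List X →₀ K))) [w] = 0 := by
      by_cases hw : w = z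
      · subst hw; rw [Ma]; simp [Finsupp.single_apply]
      · exact Mn _ _ _ hw
    have t3 : ∀ t : X, (Finsupp.mapDomain (t :: ·)
        ((Finsupp.single [b] 1 : List X →₀ K))) [w] = 0 := by
      intro t
      by_cases hw : w = t
      · subst hw; rw [Ma]; simp [Finsupp.single_apply]
      · exact Mn _ _ _ hw
    rw [h, Finsupp.add_apply, Finsupp.add_apply, Finsupp.smul_apply,
      Finsupp.smul_apply, Finsupp.sum_apply, t1, t2]
    simp [t3]
  -- the singleton component of a triple product
  have key : ∀ x y z w : X,
      (B (B (Finsupp.single [x] 1) (Finsupp.single [y] 1)) (Finsupp.single [z] 1)) [w]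
        = (f3 x y).sum (fun t c => c * f3 t z w) := by
    intro x y z w
    rw [B1 x y, map_add, map_add, map_smul, map_smul, map_finsuppSum]
    rw [LinearMap.add_apply, LinearMap.add_apply, LinearMap.smul_apply,
      LinearMap.smul_apply, LinearMap.finsupp_sum_apply]
    simp only [map_smul]
    rw [Finsupp.add_apply, Finsupp.add_apply, Finsupp.smul_apply,
      Finsupp.smul_apply, Finsupp.sum_apply]
    rw [L2 x y z w, L2 y x z w]
    simp only [smul_zero, LinearMap.smul_apply, Finsupp.smul_apply, smul_eq_mul,
      mul_zero, zero_add, add_zero]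
    exact Finsupp.sum_congr fun t _ => by rw [Bt]
  refine ⟨hc, ?_⟩
  intro x y z
  ext w
  rw [Finsupp.sum_apply, Finsupp.sum_apply]
  simp only [Finsupp.smul_apply, smul_eq_mul]
  calc (f3 x y).sum (fun t c => c * f3 t z w)
      = (B (B (Finsupp.single [x] 1) (Finsupp.single [y] 1)) (Finsupp.single [z] 1)) [w] :=
        (key x y z w).symm
    _ = (B (B (Finsupp.single [y] 1) (Finsupp.single [z] 1)) (Finsupp.single [x] 1)) [w] := by
        rw [hassoc, hcomm]
    _ = (f3 y z).sum (fun t c => c * f3 t x w) := key y z x w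
    _ = (f3 y z).sum (fun t c => c * f3 x t w) :=
        Finsupp.sum_congr fun t _ => by rw [hc t x]
end

section
/- Let ☐ be a weak stuffle product on K⟨X⟩ and a a letter with f₃(a⊗a) ≠ 0. Then f₁(a⊗a) = f₂(a⊗a) ∈ {0, 1}. -/
namespace WeakStuffleProof
variable {K X : Type*} [Field K] [CharZero K] [DecidableEq X]
set_option linter.unusedSectionVars false
set_option maxHeartbeats 1000000

theorem mapDomain_cons_apply (x : X) (M : List X →₀ K) (y : X) (t : List X) :
    Finsupp.mapDomain (x :: ·) M (y :: t) = if y = x then M t else 0 := by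
  by_cases h : y = x
  · subst h
    rw [if_pos rfl]
    exact Finsupp.mapDomain_apply (fun l₁ l₂ e => by simpa using e) M t
  · rw [if_neg h]
    refine Finsupp.mapDomain_notin_range _ _ ?_
    rintro ⟨l, hl⟩
    exact h (by injection hl with h1 _; exact h1.symm)

theorem mapDomain_cons_apply_nil (x : X) (M : List X →₀ K) :
    Finsupp.mapDomain (x :: ·) M [] = 0 := by
  refine Finsupp.mapDomain_notin_range _ _ ?_
  rintro ⟨l, hl⟩
  cases hl

theorem sum_pick (g : X →₀ K) (t : X) (h : X → K) :
    (g.sum fun y c => if y = t then c * h y else 0) = g t * h t := by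
  rw [Finsupp.sum]
  refine (Finset.sum_eq_single t ?_ ?_).trans ?_
  · intro b _ hb; rw [if_neg hb]
  · intro h'
    rw [if_pos rfl, Finsupp.notMem_support_iff.mp h', zero_mul]
  · rw [if_pos rfl]

theorem f3sum_apply_cons (g : X →₀ K) (M : List X →₀ K) (y : X) (t : List X) :
    (g.sum fun x c => c • Finsupp.mapDomain (x :: ·) M) (y :: t) = g y * M t := by
  rw [Finsupp.sum_apply]
  have e : ∀ x c, (c • Finsupp.mapDomain (x :: ·) M) (y :: t)
      = if x = y then c * M t else 0 := by
    intro x c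
    rw [Finsupp.smul_apply, smul_eq_mul, mapDomain_cons_apply]
    by_cases h : y = x
    · subst h; simp
    · rw [if_neg h, if_neg (Ne.symm h), mul_zero]
  simp only [e]
  exact sum_pick g y fun _ => M t

theorem f3sum_apply_nil (g : X →₀ K) (M : List X →₀ K) :
    (g.sum fun x c => c • Finsupp.mapDomain (x :: ·) M) [] = 0 := by
  rw [Finsupp.sum_apply]
  simp [mapDomain_cons_apply_nil]

theorem mapDomain_sum_single (f : List X → List X) (g : X →₀ K) (F : X → List X) :
    Finsupp.mapDomain f (g.sum fun y c => c • Finsupp.single (F y) (1 : K))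
      = g.sum fun y c => c • Finsupp.single (f (F y)) (1 : K) := by
  rw [show Finsupp.mapDomain f (g.sum fun y c => c • Finsupp.single (F y) (1 : K))
      = Finsupp.mapDomain.addMonoidHom f (g.sum fun y c => c • Finsupp.single (F y) (1 : K))
      from rfl,
    map_finsuppSum]
  exact Finsupp.sum_congr fun y _ => by
    rw [show Finsupp.mapDomain.addMonoidHom f ((g y) • Finsupp.single (F y) (1 : K))
        = Finsupp.mapDomain f ((g y) • Finsupp.single (F y) (1 : K)) from rfl,
      Finsupp.mapDomain_smul, Finsupp.mapDomain_single]

theorem fsum_zero (g : X →₀ K) : (g.sum fun _ _ => (0 : K)) = 0 :=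
  Finset.sum_const_zero

section BLemmas

variable (B : (List X →₀ K) →ₗ[K] (List X →₀ K) →ₗ[K] (List X →₀ K))
variable (f1 f2 : X → X → K) (f3 : X → X → (X →₀ K))

theorem apply1_sum (g : X →₀ K) (F : X → K → (List X →₀ K)) (z : List X →₀ K)
    (w : List X) :
    B (g.sum F) z w = g.sum fun y c => B (F y c) z w := by
  rw [Finsupp.sum, Finsupp.sum, map_sum, LinearMap.sum_apply,
    Finsupp.finset_sum_apply]

theorem apply2_sum (p : List X →₀ K) (g : X →₀ K) (F : X → K → (List X →₀ K))
    (w : List X) :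
    B p (g.sum F) w = g.sum fun y c => B p (F y c) w := by
  rw [Finsupp.sum, Finsupp.sum, map_sum, Finsupp.finset_sum_apply]

theorem apply1_smul (c : K) (p z : List X →₀ K) (w : List X) :
    B (c • p) z w = c * B p z w := by
  rw [map_smul, LinearMap.smul_apply, Finsupp.smul_apply, smul_eq_mul]

theorem apply2_smul (c : K) (p z : List X →₀ K) (w : List X) :
    B p (c • z) w = c * B p z w := by
  rw [map_smul, Finsupp.smul_apply, smul_eq_mul]

theorem apply1_add (p q z : List X →₀ K) (w : List X) :
    B (p + q) z w = B p z w + B q z w := by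
  rw [map_add, LinearMap.add_apply, Finsupp.add_apply]

theorem apply2_add (p q z : List X →₀ K) (w : List X) :
    B z (p + q) w = B z p w + B z q w := by
  rw [map_add, Finsupp.add_apply]

def Hcomm : Prop := ∀ x y, B x y = B y x
def Hunit : Prop := ∀ x : List X →₀ K, B (Finsupp.single [] 1) x = x
def Hrec : Prop := ∀ (a b : X) (u v : List X),
      B (Finsupp.single (a :: u) 1) (Finsupp.single (b :: v) 1) =
        f1 a b • Finsupp.mapDomain (a :: ·)
            (B (Finsupp.single u 1) (Finsupp.single (b :: v) 1)) +
        f2 a b • Finsupp.mapDomain (b :: ·)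
            (B (Finsupp.single (a :: u) 1) (Finsupp.single v 1)) +
        (f3 a b).sum (fun x c => c • Finsupp.mapDomain (x :: ·)
            (B (Finsupp.single u 1) (Finsupp.single v 1)))

variable {B} {f1 f2 f3}

theorem c_nil_left (hunit : Hunit B) (v w : List X) :
    B (Finsupp.single [] 1) (Finsupp.single v 1) w = if v = w then 1 else 0 := by
  rw [hunit, Finsupp.single_apply]

theorem c_nil_right (hcomm : Hcomm B) (hunit : Hunit B) (u w : List X) :
    B (Finsupp.single u 1) (Finsupp.single [] 1) w = if u = w then 1 else 0 := by
  rw [hcomm, hunit, Finsupp.single_apply]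

theorem c_rec (hrec : Hrec B f1 f2 f3) (a b : X) (u v : List X) (y : X) (t : List X) :
    B (Finsupp.single (a :: u) 1) (Finsupp.single (b :: v) 1) (y :: t)
      = f1 a b * (if y = a then B (Finsupp.single u 1) (Finsupp.single (b :: v) 1) t else 0)
      + f2 a b * (if y = b then B (Finsupp.single (a :: u) 1) (Finsupp.single v 1) t else 0)
      + f3 a b y * B (Finsupp.single u 1) (Finsupp.single v 1) t := by
  rw [hrec, Finsupp.add_apply, Finsupp.add_apply, Finsupp.smul_apply,
    Finsupp.smul_apply, smul_eq_mul, smul_eq_mul, mapDomain_cons_apply,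
    mapDomain_cons_apply, f3sum_apply_cons, mul_ite, mul_ite, mul_zero, mul_zero]

theorem c_cons_nil (hrec : Hrec B f1 f2 f3) (a b : X) (u v : List X) :
    B (Finsupp.single (a :: u) 1) (Finsupp.single (b :: v) 1) [] = 0 := by
  rw [hrec, Finsupp.add_apply, Finsupp.add_apply, Finsupp.smul_apply,
    Finsupp.smul_apply, mapDomain_cons_apply_nil, mapDomain_cons_apply_nil,
    f3sum_apply_nil, smul_zero, smul_zero, add_zero, add_zero]

theorem c_len (hcomm : Hcomm B) (hunit : Hunit B) (hrec : Hrec B f1 f2 f3) (w : List X) : ∀ u v : List X, u.length + v.length < w.length →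
    B (Finsupp.single u 1) (Finsupp.single v 1) w = 0 := by
  induction w with
  | nil => intro u v h; simp at h
  | cons y t ih =>
    intro u v h
    match u, v with
    | [], v =>
      rw [c_nil_left hunit, if_neg]
      rintro rfl
      simp only [List.length_nil, List.length_cons] at h
      omega
    | a :: u', [] =>
      rw [c_nil_right hcomm hunit, if_neg]
      intro e
      have := congrArg List.length e
      simp at this h
      omega
    | a :: u', b :: v' =>
      simp only [List.length_cons] at h
      rw [c_rec hrec,
        ih u' (b :: v') (by simp only [List.length_cons]; omega),
        ih (a :: u') v' (by simp only [List.length_cons]; omega),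
        ih u' v' (by omega)]
      simp

theorem Pone (hcomm : Hcomm B) (hunit : Hunit B) (hrec : Hrec B f1 f2 f3) (a b : X) :
    B (Finsupp.single [a] 1) (Finsupp.single [b] 1)
      = f1 a b • Finsupp.single [a, b] 1 + f2 a b • Finsupp.single [b, a] 1
        + (f3 a b).sum fun y c => c • Finsupp.single [y] (1 : K) := by
  rw [hrec a b [] []]
  have hu : ∀ x : List X →₀ K, B (Finsupp.single [] 1) x = x := hunit
  have hru : ∀ x : List X →₀ K, B x (Finsupp.single [] 1) = x :=
    fun x => (hcomm _ _).trans (hu x)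
  simp only [hu, hru, Finsupp.mapDomain_single]

theorem Ptwo (hcomm : Hcomm B) (hunit : Hunit B) (hrec : Hrec B f1 f2 f3) (a : X) :
    B (Finsupp.single [a] 1) (Finsupp.single [a, a] 1)
      = f1 a a • Finsupp.single [a, a, a] 1
        + f2 a a • (f1 a a • Finsupp.single [a, a, a] 1 + f2 a a • Finsupp.single [a, a, a] 1
            + (f3 a a).sum fun y c => c • Finsupp.single [a, y] (1 : K))
        + (f3 a a).sum fun y c => c • Finsupp.single [y, a] (1 : K) := by
  rw [hrec a a [] [a]]
  have hu : ∀ x : List X →₀ K, B (Finsupp.single [] 1) x = x := hunit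
  simp only [hu, Finsupp.mapDomain_single]
  rw [Pone hcomm hunit hrec a a]
  rw [Finsupp.mapDomain_add, Finsupp.mapDomain_add, Finsupp.mapDomain_smul,
    Finsupp.mapDomain_smul, Finsupp.mapDomain_single,
    mapDomain_sum_single (a :: ·) (f3 a a) (fun y => [y])]

end BLemmas
end WeakStuffleProof


/-- For a weak stuffle product, if `f₃(a⊗a) ≠ 0` for a letter `a`, then
`f₁(a⊗a) = f₂(a⊗a) ∈ {0, 1}`. -/
theorem weakStuffle_f3_diag_ne_zero {K X : Type*} [Field K] [CharZero K] [Countable X]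
    (B : (List X →₀ K) →ₗ[K] (List X →₀ K) →ₗ[K] (List X →₀ K))
    (f1 f2 : X → X → K) (f3 : X → X → (X →₀ K))
    (hcomm : ∀ x y, B x y = B y x)
    (hassoc : ∀ x y z, B (B x y) z = B x (B y z))
    (hunit : ∀ x, B (Finsupp.single [] 1) x = x)
    (hrec : ∀ (a b : X) (u v : List X),
      B (Finsupp.single (a :: u) 1) (Finsupp.single (b :: v) 1) =
        f1 a b • Finsupp.mapDomain (a :: ·)
            (B (Finsupp.single u 1) (Finsupp.single (b :: v) 1)) +
        f2 a b • Finsupp.mapDomain (b :: ·)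
            (B (Finsupp.single (a :: u) 1) (Finsupp.single v 1)) +
        (f3 a b).sum (fun x c => c • Finsupp.mapDomain (x :: ·)
            (B (Finsupp.single u 1) (Finsupp.single v 1))))
    (a : X) (ha : f3 a a ≠ 0) :
    f1 a a = f2 a a ∧ (f1 a a = 0 ∨ f1 a a = 1) := by
  classical
  obtain ⟨x, hgx⟩ : ∃ x, f3 a a x ≠ 0 := by
    by_contra h
    push_neg at h
    exact ha (Finsupp.ext fun y => h y)
  have hC : WeakStuffleProof.Hcomm B := hcomm
  have hU : WeakStuffleProof.Hunit B := hunit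
  have hR : WeakStuffleProof.Hrec B f1 f2 f3 := hrec
  have NL := WeakStuffleProof.c_nil_left hU
  have NR := WeakStuffleProof.c_nil_right hC hU
  have R := WeakStuffleProof.c_rec hR
  have LEN := WeakStuffleProof.c_len hC hU hR
  have Pone := WeakStuffleProof.Pone hC hU hR
  have Ptwo := WeakStuffleProof.Ptwo hC hU hR (a := a)
  -- expansion of the left side of associativity
  have expandL : ∀ (z : List X →₀ K) (w : List X),
      B (B (Finsupp.single [a] 1) (Finsupp.single [a] 1)) z w
        = f1 a a * B (Finsupp.single [a, a] 1) z w
          + f2 a a * B (Finsupp.single [a, a] 1) z w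
          + (f3 a a).sum (fun y c => c * B (Finsupp.single [y] 1) z w) := by
    intro z w
    rw [Pone a a]
    rw [WeakStuffleProof.apply1_add, WeakStuffleProof.apply1_add,
      WeakStuffleProof.apply1_smul, WeakStuffleProof.apply1_smul,
      WeakStuffleProof.apply1_sum]
    simp only [WeakStuffleProof.apply1_smul]
  -- expansion of the right side with third factor [a,a]
  have expandR2 : ∀ w : List X,
      B (Finsupp.single [a] 1) (B (Finsupp.single [a] 1) (Finsupp.single [a, a] 1)) w
        = f1 a a * B (Finsupp.single [a] 1) (Finsupp.single [a, a, a] 1) w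
          + f2 a a * (f1 a a * B (Finsupp.single [a] 1) (Finsupp.single [a, a, a] 1) w
              + f2 a a * B (Finsupp.single [a] 1) (Finsupp.single [a, a, a] 1) w
              + (f3 a a).sum (fun y c =>
                  c * B (Finsupp.single [a] 1) (Finsupp.single [a, y] 1) w))
          + (f3 a a).sum (fun y c =>
              c * B (Finsupp.single [a] 1) (Finsupp.single [y, a] 1) w) := by
    intro w
    rw [Ptwo]
    simp only [WeakStuffleProof.apply2_add, WeakStuffleProof.apply2_smul,
      WeakStuffleProof.apply2_sum]
  -- expansion of the right side with third factor a single letter [b]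
  have expandRx : ∀ (b : X) (w : List X),
      B (Finsupp.single [a] 1) (B (Finsupp.single [a] 1) (Finsupp.single [b] 1)) w
        = f1 a b * B (Finsupp.single [a] 1) (Finsupp.single [a, b] 1) w
          + f2 a b * B (Finsupp.single [a] 1) (Finsupp.single [b, a] 1) w
          + (f3 a b).sum (fun y c =>
              c * B (Finsupp.single [a] 1) (Finsupp.single [y] 1) w) := by
    intro b w
    rw [Pone a b]
    simp only [WeakStuffleProof.apply2_add, WeakStuffleProof.apply2_smul,
      WeakStuffleProof.apply2_sum]
  -- value: B [a][a] at one-letter words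
  have vaa1 : ∀ y : X, B (Finsupp.single [a] 1) (Finsupp.single [a] 1) [y]
      = f3 a a y := by
    intro y
    rw [R a a [] [] y []]
    simp only [NL, NR]
    simp
  -- value: B [a][a] at [a,a]
  have vaa2 : B (Finsupp.single [a] 1) (Finsupp.single [a] 1) [a, a]
      = f1 a a + f2 a a := by
    rw [R a a [] [] a [a]]
    simp only [NL, NR]
    simp
  -- Step 1 : f1 a a = f2 a a
  have hab : f1 a a = f2 a a := by
    have s1 : B (Finsupp.single [a] 1) (Finsupp.single [a, a] 1) [a, x]
        = f2 a a * f3 a a x + f3 a a a * (if a = x then (1 : K) else 0) := by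
      rw [R a a [] [a] a [x]]
      simp only [NL, NR, vaa1]
      simp
    have s2 : B (Finsupp.single [a, a] 1) (Finsupp.single [a] 1) [a, x]
        = f1 a a * f3 a a x + f3 a a a * (if a = x then (1 : K) else 0) := by
      rw [R a a [a] [] a [x]]
      simp only [NL, NR, vaa1]
      simp
    have h1 := DFunLike.congr_fun
      (hcomm (Finsupp.single [a] 1) (Finsupp.single [a, a] 1)) [a, x]
    rw [s1, s2] at h1
    refine (mul_right_cancel₀ hgx ?_).symm
    linear_combination h1
  refine ⟨hab, ?_⟩
  by_cases hxa : x = a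
  · -- case x = a : use coefficients of [a,a,a] and [a,a,a,a]
    subst hxa
    have V3 : B (Finsupp.single [x] 1) (Finsupp.single [x, x] 1) [x, x]
        = f2 x x * f3 x x x + f3 x x x := by
      rw [R x x [] [x] x [x]]
      simp only [NL, NR, vaa1]
      simp
    have V4 : B (Finsupp.single [x, x] 1) (Finsupp.single [x] 1) [x, x]
        = f1 x x * f3 x x x + f3 x x x := by
      rw [R x x [x] [] x [x]]
      simp only [NL, NR, vaa1]
      simp
    have V5 : B (Finsupp.single [x] 1) (Finsupp.single [x, x] 1) [x, x, x]
        = f1 x x + f2 x x * (f1 x x + f2 x x) := by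
      rw [R x x [] [x] x [x, x]]
      simp only [NL, NR, vaa2]
      simp
    have V6 : B (Finsupp.single [x, x] 1) (Finsupp.single [x] 1) [x, x, x]
        = f1 x x * (f1 x x + f2 x x) + f2 x x := by
      rw [R x x [x] [] x [x, x]]
      simp only [NL, NR, vaa2]
      simp
    have V7 : B (Finsupp.single [x, x] 1) (Finsupp.single [x, x] 1) [x, x, x]
        = f1 x x * (f2 x x * f3 x x x + f3 x x x)
          + f2 x x * (f1 x x * f3 x x x + f3 x x x)
          + f3 x x x * (f1 x x + f2 x x) := by
      rw [R x x [x] [x] x [x, x]]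
      simp only [V3, V4, vaa2]
      simp
    have V8 : B (Finsupp.single [x, x] 1) (Finsupp.single [x, x] 1) [x, x, x, x]
        = f1 x x * (f1 x x + f2 x x * (f1 x x + f2 x x))
          + f2 x x * (f1 x x * (f1 x x + f2 x x) + f2 x x) := by
      rw [R x x [x] [x] x [x, x, x]]
      simp only [V5, V6, LEN [x, x, x] [x] [x] (by simp)]
      simp
    have V9 : B (Finsupp.single [x] 1) (Finsupp.single [x, x, x] 1) [x, x, x]
        = f2 x x * (f2 x x * f3 x x x + f3 x x x) + f3 x x x := by
      rw [R x x [] [x, x] x [x, x]]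
      simp only [NL, V3]
      simp
    have V10 : B (Finsupp.single [x] 1) (Finsupp.single [x, x, x] 1) [x, x, x, x]
        = f1 x x + f2 x x * (f1 x x + f2 x x * (f1 x x + f2 x x)) := by
      rw [R x x [] [x, x] x [x, x, x]]
      simp only [NL, V5]
      simp
    have G1 : ∀ y : X, B (Finsupp.single [y] 1) (Finsupp.single [x, x] 1) [x, x, x]
        = if y = x then f1 x x + f2 x x * (f1 x x + f2 x x) else 0 := by
      intro y
      by_cases hy : y = x
      · rw [if_pos hy, hy, R x x [] [x] x [x, x]]
        simp only [NL, NR, vaa2]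
        simp
      · rw [if_neg hy, R y x [] [x] x [x, x]]
        have hyx : ¬ (x = y) := fun e => hy e.symm
        have inner : B (Finsupp.single [y] 1) (Finsupp.single [x] 1) [x, x] = 0 := by
          rw [R y x [] [] x [x]]
          simp only [NL, NR]
          simp [hyx, hy]

        simp only [NL, NR, inner]
        simp [hyx]
    have G2 : ∀ y : X, B (Finsupp.single [y] 1) (Finsupp.single [x, x] 1) [x, x, x, x]
        = 0 := by
      intro y
      rw [R y x [] [x] x [x, x, x]]
      have inner : B (Finsupp.single [y] 1) (Finsupp.single [x] 1) [x, x, x] = 0 :=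
        LEN [x, x, x] [y] [x] (by simp)
      simp only [NL, NR, inner]
      simp
    have G3 : ∀ y : X, B (Finsupp.single [x] 1) (Finsupp.single [x, y] 1) [x, x, x]
        = if y = x then f1 x x + f2 x x * (f1 x x + f2 x x) else 0 := by
      intro y
      by_cases hy : y = x
      · rw [if_pos hy, hy, R x x [] [x] x [x, x]]
        simp only [NL, NR, vaa2]
        simp
      · rw [if_neg hy, R x x [] [y] x [x, x]]
        have hyx : ¬ (x = y) := fun e => hy e.symm
        have inner : B (Finsupp.single [x] 1) (Finsupp.single [y] 1) [x, x] = 0 := by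
          rw [R x y [] [] x [x]]
          simp only [NL, NR]
          simp [hy, hyx]
        simp only [NL, NR, inner]
        simp [hy]
    have G4 : ∀ y : X, B (Finsupp.single [x] 1) (Finsupp.single [y, x] 1) [x, x, x]
        = if y = x then f1 x x + f2 x x * (f1 x x + f2 x x) else 0 := by
      intro y
      by_cases hy : y = x
      · rw [if_pos hy, hy, R x x [] [x] x [x, x]]
        simp only [NL, NR, vaa2]
        simp
      · rw [if_neg hy, R x y [] [x] x [x, x]]
        have hyx : ¬ (x = y) := fun e => hy e.symm
        simp only [NL, NR, vaa2]
        simp [hy, hyx]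
    have G5 : ∀ y : X, B (Finsupp.single [x] 1) (Finsupp.single [x, y] 1) [x, x, x, x]
        = 0 := by
      intro y
      rw [R x x [] [y] x [x, x, x]]
      have inner : B (Finsupp.single [x] 1) (Finsupp.single [y] 1) [x, x, x] = 0 :=
        LEN [x, x, x] [x] [y] (by simp)
      simp only [NL, NR, inner]
      simp
    have G6 : ∀ y : X, B (Finsupp.single [x] 1) (Finsupp.single [y, x] 1) [x, x, x, x]
        = 0 := by
      intro y
      rw [R x y [] [x] x [x, x, x]]
      have inner : B (Finsupp.single [x] 1) (Finsupp.single [x] 1) [x, x, x] = 0 :=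
        LEN [x, x, x] [x] [x] (by simp)
      simp only [NL, NR, inner]
      simp
    have hassoc2 := hassoc (Finsupp.single [x] 1) (Finsupp.single [x] 1)
      (Finsupp.single [x, x] 1)
    have Eaaa := DFunLike.congr_fun hassoc2 [x, x, x]
    have Eaaaa := DFunLike.congr_fun hassoc2 [x, x, x, x]
    rw [expandL, expandR2] at Eaaa Eaaaa
    simp only [G1, G3, G4, V7, V9, mul_ite, mul_zero] at Eaaa
    rw [WeakStuffleProof.sum_pick] at Eaaa
    simp only [G2, G5, G6, V8, V10, mul_zero, WeakStuffleProof.fsum_zero] at Eaaaa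
    rw [← hab] at Eaaa Eaaaa
    set L := f1 x x with hL
    have P1 : L * ((L - 1) * (2 * L ^ 2 + 3 * L - 1)) = 0 := by
      apply mul_right_cancel₀ hgx
      rw [zero_mul]
      linear_combination -Eaaa
    have P2 : L ^ 2 * ((L - 1) * ((2 * L - 1) * (2 * L + 1))) = 0 := by
      linear_combination -Eaaaa
    rcases mul_eq_zero.mp P1 with h | h
    · exact Or.inl h
    rcases mul_eq_zero.mp h with h | h
    · exact Or.inr (by linear_combination h)
    rcases mul_eq_zero.mp P2 with h' | h'
    · exact Or.inl (by
        have := pow_eq_zero_iff (n := 2) (by norm_num) |>.mp h'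
        exact this)
    rcases mul_eq_zero.mp h' with h' | h'
    · exact Or.inr (by linear_combination h')
    rcases mul_eq_zero.mp h' with h' | h'
    · exfalso
      have : (1 : K) = 0 := by linear_combination h - (L + 2) * h'
      exact one_ne_zero this
    · exfalso
      have : (-2 : K) = 0 := by linear_combination h - (L + 1) * h'
      norm_num at this
  · -- case x ≠ a
    have hax : ¬ (x = a) := hxa
    have hax' : ¬ (a = x) := fun e => hax e.symm
    -- Step 2 : f2 a x = f1 a a
    have W1 : B (Finsupp.single [a, a] 1) (Finsupp.single [a, a] 1) [x, x]
        = f3 a a x * f3 a a x := by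
      rw [R a a [a] [a] x [x]]
      simp only [vaa1]
      simp [hax, hax']
    have W2 : ∀ y : X, B (Finsupp.single [y] 1) (Finsupp.single [a, a] 1) [x, x]
        = 0 := by
      intro y
      rw [R y a [] [a] x [x]]
      simp only [NL, NR]
      simp [hax, hax']
    have W3 : B (Finsupp.single [a] 1) (Finsupp.single [a, a, a] 1) [x, x] = 0 := by
      rw [R a a [] [a, a] x [x]]
      simp only [NL]
      simp [hax, hax']
    have W4 : ∀ y : X, B (Finsupp.single [a] 1) (Finsupp.single [a, y] 1) [x, x]
        = if y = x then f3 a a x else 0 := by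
      intro y
      rw [R a a [] [y] x [x]]
      simp only [NL]
      by_cases hy : y = x
      · rw [hy, if_pos rfl]
        simp [hax, hax']
      · rw [if_neg hy]
        have hyx : ¬ (x = y) := fun e => hy e.symm
        simp [hax, hax', hy, hyx]
    have W5 : ∀ y : X, B (Finsupp.single [a] 1) (Finsupp.single [y, a] 1) [x, x]
        = if y = x then f2 a y * f3 a a x else 0 := by
      intro y
      rw [R a y [] [a] x [x]]
      simp only [NL, vaa1]
      by_cases hy : y = x
      · rw [hy, if_pos rfl]
        simp [hax, hax']
      · rw [if_neg hy]
        have hyx : ¬ (x = y) := fun e => hy e.symm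
        simp [hax, hax', hy, hyx]
    have hassoc2 := hassoc (Finsupp.single [a] 1) (Finsupp.single [a] 1)
      (Finsupp.single [a, a] 1)
    have Exx := DFunLike.congr_fun hassoc2 [x, x]
    rw [expandL, expandR2] at Exx
    simp only [W1, W2, W3, W4, W5, mul_ite, mul_zero, WeakStuffleProof.fsum_zero] at Exx
    rw [WeakStuffleProof.sum_pick, WeakStuffleProof.sum_pick] at Exx
    have hq : f2 a x = f1 a a := by
      have hg2 : f3 a a x * f3 a a x ≠ 0 := mul_ne_zero hgx hgx
      apply mul_right_cancel₀ hg2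
      linear_combination -Exx
    -- Step 3 : associativity with third factor [x] at word [x,a,a]
    have U1 : B (Finsupp.single [a, a] 1) (Finsupp.single [x] 1) [x, a, a]
        = f2 a x := by
      rw [R a x [a] [] x [a, a]]
      simp only [NL, NR]
      simp [hax, hax']
    have U2 : ∀ y : X, B (Finsupp.single [y] 1) (Finsupp.single [x] 1) [x, a, a]
        = 0 := fun y => LEN [x, a, a] [y] [x] (by simp)
    have U3 : B (Finsupp.single [a] 1) (Finsupp.single [a, x] 1) [x, a, a] = 0 := by
      rw [R a a [] [x] x [a, a]]
      simp only [NL]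
      simp [hax, hax']
    have U4 : B (Finsupp.single [a] 1) (Finsupp.single [x, a] 1) [x, a, a]
        = f2 a x * (f1 a a + f2 a a) := by
      rw [R a x [] [a] x [a, a]]
      simp only [NL, vaa2]
      simp [hax, hax']
    have U5 : ∀ y : X, B (Finsupp.single [a] 1) (Finsupp.single [y] 1) [x, a, a]
        = 0 := fun y => LEN [x, a, a] [a] [y] (by simp)
    have hassoc3 := hassoc (Finsupp.single [a] 1) (Finsupp.single [a] 1)
      (Finsupp.single [x] 1)
    have Ex := DFunLike.congr_fun hassoc3 [x, a, a]
    rw [expandL, expandRx] at Ex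
    simp only [U1, U2, U3, U4, U5, mul_zero, WeakStuffleProof.fsum_zero] at Ex
    rw [hq, ← hab] at Ex
    have key : f1 a a ^ 2 * (f1 a a - 1) = 0 := by
      have h2 : (2 : K) ≠ 0 := two_ne_zero
      apply mul_left_cancel₀ h2
      rw [mul_zero]
      linear_combination -Ex
    rcases mul_eq_zero.mp key with h | h
    · exact Or.inl (pow_eq_zero_iff (by norm_num) |>.mp h)
    · exact Or.inr (by linear_combination h)
end

section
/- Let X = {x₁, x₂, ...} be an infinite alphabet and ☐ a weak stuffle product on K⟨X⟩ such that f₃(xᵢ⊗xⱼ) is a nonzero scalar multiple of x_{i+j} for all positive integers i, j. Then the underlying weak shuffle structure constants satisfy either f₁ ≡ 0 and f₂ ≡ 0, or f₁(a⊗b) = f₂(a⊗b) = 1 for all letters a, b. -/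
set_option maxHeartbeats 2000000


/-- On the infinite alphabet `X = {x₁, x₂, ...}`, if a weak stuffle product has
`f₃(xᵢ⊗xⱼ)` a nonzero scalar multiple of `x_{i+j}` for all `i, j`, then the
underlying weak shuffle part is either null or the classical shuffle:
`f₁ ≡ 0 ≡ f₂` or `f₁ ≡ 1 ≡ f₂`. -/
theorem weakStuffle_f3_graded {K : Type*} [Field K] [CharZero K]
    (B : (List ℕ+ →₀ K) →ₗ[K] (List ℕ+ →₀ K) →ₗ[K] (List ℕ+ →₀ K))
    (f1 f2 : ℕ+ → ℕ+ → K) (f3 : ℕ+ → ℕ+ → (ℕ+ →₀ K))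
    (hcomm : ∀ x y, B x y = B y x)
    (hassoc : ∀ x y z, B (B x y) z = B x (B y z))
    (hunit : ∀ x, B (Finsupp.single [] 1) x = x)
    (hrec : ∀ (a b : ℕ+) (u v : List ℕ+),
      B (Finsupp.single (a :: u) 1) (Finsupp.single (b :: v) 1) =
        f1 a b • Finsupp.mapDomain (a :: ·)
            (B (Finsupp.single u 1) (Finsupp.single (b :: v) 1)) +
        f2 a b • Finsupp.mapDomain (b :: ·)
            (B (Finsupp.single (a :: u) 1) (Finsupp.single v 1)) +
        (f3 a b).sum (fun x c => c • Finsupp.mapDomain (x :: ·)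
            (B (Finsupp.single u 1) (Finsupp.single v 1))))
    (hf3 : ∀ i j : ℕ+, ∃ c : K, c ≠ 0 ∧ f3 i j = Finsupp.single (i + j) c) :
    (∀ a b : ℕ+, f1 a b = 0 ∧ f2 a b = 0) ∨
    (∀ a b : ℕ+, f1 a b = 1 ∧ f2 a b = 1) := by
  classical
  choose cf hcf0 hcf using hf3
  set w : List ℕ+ → (List ℕ+ →₀ K) := fun l => Finsupp.single l 1 with hw
  -- basic pnat inequalities, used to distinguish words
  have ne1 : ∀ x y : ℕ+, x + y ≠ x := fun x y => (PNat.lt_add_right x y).ne'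
  have ne2 : ∀ x y : ℕ+, x ≠ x + y := fun x y => (PNat.lt_add_right x y).ne
  have ne3 : ∀ x y : ℕ+, y ≠ x + y := fun x y => (PNat.lt_add_left y x).ne
  have ne4 : ∀ x y : ℕ+, x + y ≠ y := fun x y => (PNat.lt_add_left y x).ne'
  have hnil : ∀ x, B (w []) x = x := hunit
  have hnil' : ∀ x, B x (w []) = x := fun x => by rw [hcomm]; exact hunit x
  have hr : ∀ (a b : ℕ+) (u v : List ℕ+),
      B (w (a::u)) (w (b::v)) =
        f1 a b • Finsupp.mapDomain (a :: ·) (B (w u) (w (b::v))) +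
        f2 a b • Finsupp.mapDomain (b :: ·) (B (w (a::u)) (w v)) +
        cf a b • Finsupp.mapDomain ((a+b) :: ·) (B (w u) (w v)) := by
    intro a b u v
    rw [hw]; rw [hrec, hcf, Finsupp.sum_single_index (by simp)]
  have P1 : ∀ a b : ℕ+, B (w [a]) (w [b]) =
      f1 a b • w [a,b] + f2 a b • w [b,a] + cf a b • w [a+b] := by
    intro a b
    rw [hr a b [] [], hnil, hnil' (w [a]), hnil (w [])]
    simp only [hw, Finsupp.mapDomain_single]
  have P2 : ∀ a b c : ℕ+, B (w [a,b]) (w [c]) =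
      (f1 a c * f1 b c) • w [a,b,c] + (f1 a c * f2 b c) • w [a,c,b] +
      (f1 a c * cf b c) • w [a,b+c] + f2 a c • w [c,a,b] + cf a c • w [a+c,b] := by
    intro a b c
    rw [hr a c [b] [], P1 b c, hnil' (w [a,b]), hnil' (w [b])]
    simp only [hw, Finsupp.mapDomain_add, Finsupp.mapDomain_smul, Finsupp.mapDomain_single]
    try module
  have P3 : ∀ a b c : ℕ+, B (w [a]) (w [b,c]) =
      f1 a b • w [a,b,c] + (f2 a b * f1 a c) • w [b,a,c] + (f2 a b * f2 a c) • w [b,c,a] +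
      (f2 a b * cf a c) • w [b,a+c] + cf a b • w [a+b,c] := by
    intro a b c
    rw [hr a b [] [c], hnil, P1 a c, hnil (w [c])]
    simp only [hw, Finsupp.mapDomain_add, Finsupp.mapDomain_smul, Finsupp.mapDomain_single]
    try module
  -- the master associativity identity on three letters
  have M : ∀ a b c : ℕ+,
      (f1 a b * (f1 a c * f1 b c)) • w [a,b,c] + (f1 a b * (f1 a c * f2 b c)) • w [a,c,b] +
      (f1 a b * (f1 a c * cf b c)) • w [a,b+c] + (f1 a b * f2 a c) • w [c,a,b] +
      (f1 a b * cf a c) • w [a+c,b] +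
      (f2 a b * (f1 b c * f1 a c)) • w [b,a,c] + (f2 a b * (f1 b c * f2 a c)) • w [b,c,a] +
      (f2 a b * (f1 b c * cf a c)) • w [b,a+c] + (f2 a b * f2 b c) • w [c,b,a] +
      (f2 a b * cf b c) • w [b+c,a] +
      (cf a b * f1 (a+b) c) • w [a+b,c] + (cf a b * f2 (a+b) c) • w [c,a+b] +
      (cf a b * cf (a+b) c) • w [a+b+c] =
      (f1 b c * f1 a b) • w [a,b,c] + (f1 b c * (f2 a b * f1 a c)) • w [b,a,c] +
      (f1 b c * (f2 a b * f2 a c)) • w [b,c,a] + (f1 b c * (f2 a b * cf a c)) • w [b,a+c] +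
      (f1 b c * cf a b) • w [a+b,c] +
      (f2 b c * f1 a c) • w [a,c,b] + (f2 b c * (f2 a c * f1 a b)) • w [c,a,b] +
      (f2 b c * (f2 a c * f2 a b)) • w [c,b,a] + (f2 b c * (f2 a c * cf a b)) • w [c,a+b] +
      (f2 b c * cf a c) • w [a+c,b] +
      (cf b c * f1 a (b+c)) • w [a,b+c] + (cf b c * f2 a (b+c)) • w [b+c,a] +
      (cf b c * cf a (b+c)) • w [a+b+c] := by
    intro a b c
    have h := hassoc (w [a]) (w [b]) (w [c])
    rw [P1 a b, P1 b c] at h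
    simp only [map_add, map_smul, LinearMap.add_apply, LinearMap.smul_apply] at h
    rw [P2 a b c, P2 b a c, P1 (a+b) c, P3 a b c, P3 a c b, P1 a (b+c)] at h
    calc _ = f1 a b • ((f1 a c * f1 b c) • w [a,b,c] + (f1 a c * f2 b c) • w [a,c,b] +
              (f1 a c * cf b c) • w [a,b+c] + f2 a c • w [c,a,b] + cf a c • w [a+c,b]) +
            f2 a b • ((f1 b c * f1 a c) • w [b,a,c] + (f1 b c * f2 a c) • w [b,c,a] +
              (f1 b c * cf a c) • w [b,a+c] + f2 b c • w [c,b,a] + cf b c • w [b+c,a]) +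
            cf a b • (f1 (a+b) c • w [a+b,c] + f2 (a+b) c • w [c,a+b] +
              cf (a+b) c • w [a+b+c]) := by module
      _ = _ := by
            rw [h, add_assoc a b c]
            try module
  -- commutativity on letters
  have R0 : ∀ a b : ℕ+, a ≠ b → f1 a b = f2 b a := by
    intro a b hab
    have h := hcomm (w [a]) (w [b])
    rw [P1 a b, P1 b a] at h
    have e := DFunLike.congr_fun h [a,b]
    simp [hw, Finsupp.single_apply, hab, hab.symm, List.cons_eq_cons] at e
    exact e
  -- coefficient of [a+c,b]
  have R1 : ∀ a b c : ℕ+, a ≠ b → b ≠ c → b ≠ a + c → f1 a b = f2 b c := by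
    intro a b c hab hbc hbac
    have e := DFunLike.congr_fun (M a b c) [a+c,b]
    simp [hw, Finsupp.single_apply, List.cons_eq_cons, hab, hab.symm, hbc, hbc.symm,
      hbac, hbac.symm, ne1, ne2, ne3, ne4, add_right_inj, add_left_inj] at e
    exact e.resolve_right (hcf0 a c)
  -- coefficient of [a,b,c]
  have R2 : ∀ a b c : ℕ+, a ≠ b → a ≠ c → b ≠ c →
      f1 a b * (f1 a c * f1 b c) = f1 b c * f1 a b := by
    intro a b c hab hac hbc
    have e := DFunLike.congr_fun (M a b c) [a,b,c]
    simp [hw, Finsupp.single_apply, List.cons_eq_cons, hab, hab.symm, hac, hac.symm,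
      hbc, hbc.symm, ne1, ne2, ne3, ne4, add_right_inj, add_left_inj] at e
    exact e
  -- coefficient of [a,b+c]
  have R3 : ∀ a b c : ℕ+, a ≠ b → a ≠ c → a ≠ b + c →
      f1 a b * (f1 a c * cf b c) = cf b c * f1 a (b+c) := by
    intro a b c hab hac habc
    have e := DFunLike.congr_fun (M a b c) [a,b+c]
    simp [hw, Finsupp.single_apply, List.cons_eq_cons, hab, hab.symm, hac, hac.symm,
      habc, habc.symm, ne1, ne2, ne3, ne4, add_right_inj, add_left_inj] at e
    exact e
  -- the common off-diagonal value
  set μ : ℕ+ → K := fun n => f1 (n+1) n with hμ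
  have pltne : ∀ x y z : ℕ+, x ≠ y + (x + z) := fun x y z =>
    ((PNat.lt_add_right x z).trans (PNat.lt_add_left _ y)).ne
  have hA1 : ∀ b c : ℕ+, b + c + 1 ≠ b := by
    intro b c; rw [add_right_comm b c 1, add_comm (b+1) c]; exact (pltne b c 1).symm
  have hA2 : ∀ b c : ℕ+, b + c + 1 ≠ c := fun b c => by
    rw [add_comm b c]; exact hA1 c b
  have L1 : ∀ a b : ℕ+, a ≠ b → f1 a b = μ b := by
    intro a b hab
    have h1 := R1 a b (b+1) hab (ne2 b 1) (pltne b a 1)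
    have h2 := R1 (b+1) b (b+1) (ne1 b 1) (ne2 b 1) (pltne b (b+1) 1)
    simp only [hμ]; rw [h1, h2]
  have L2 : ∀ a b : ℕ+, a ≠ b → f2 a b = μ a := by
    intro a b hab
    rw [← R0 b a hab.symm]
    exact L1 b a hab.symm
  have Lmul : ∀ b c : ℕ+, μ b * μ c = μ (b+c) := by
    intro b c
    have h := R3 (b+c+1) b c (hA1 b c) (hA2 b c) (ne1 (b+c) 1)
    have h2 : f1 (b+c+1) b * f1 (b+c+1) c = f1 (b+c+1) (b+c) :=
      mul_left_cancel₀ (hcf0 b c)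
        (show cf b c * (f1 (b+c+1) b * f1 (b+c+1) c) = cf b c * f1 (b+c+1) (b+c) by
          linear_combination h)
    rw [L1 _ b (hA1 b c), L1 _ c (hA2 b c), L1 _ (b+c) (ne1 (b+c) 1)] at h2
    exact h2
  have Lpow : ∀ n : ℕ+, μ n = μ 1 ^ (n : ℕ) := by
    intro n
    induction n using PNat.recOn with
    | one => simp
    | succ n ih =>
        rw [← Lmul n 1, ih, PNat.add_coe, PNat.one_coe, pow_succ]
  by_cases h0 : μ 1 = 0
  · -- null case
    have hμ0 : ∀ n : ℕ+, μ n = 0 := by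
      intro n; rw [Lpow, h0, zero_pow n.pos.ne']
    have hoff : ∀ x y : ℕ+, x ≠ y → f1 x y = 0 ∧ f2 x y = 0 := by
      intro x y hxy
      exact ⟨(L1 x y hxy).trans (hμ0 y), (L2 x y hxy).trans (hμ0 x)⟩
    have hdiag : ∀ a : ℕ+, f1 a a = 0 ∧ f2 a a = 0 := by
      intro a
      have hac : a ≠ a + 1 := ne2 a 1
      generalize hcg : a + 1 = c at hac
      obtain ⟨z1, z2⟩ := hoff a c hac
      obtain ⟨z3, z4⟩ := hoff a (a+c) (ne2 a c)
      obtain ⟨z5, z6⟩ := hoff (a+a) a (ne1 a a)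
      obtain ⟨z7, z8⟩ := hoff a (a+a) (ne2 a a)
      have Q1 : B (w [a]) (w [c]) = cf a c • w [a+c] := by
        rw [P1 a c, z1, z2]; module
      have Q1' : B (w [a]) (w [a+c]) = cf a (a+c) • w [a+(a+c)] := by
        rw [P1 a (a+c), z3, z4]; module
      have Q2 : B (w [a]) (w [a,c]) = f1 a a • w [a,a,c] +
          (f2 a a * cf a c) • w [a,a+c] + cf a a • w [a+a,c] := by
        rw [hr a a [] [c], hnil, Q1, hnil (w [c])]
        simp only [hw, Finsupp.mapDomain_smul, Finsupp.mapDomain_single]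
        try module
      have Q3 : B (w [a,a]) (w [c]) = cf a c • w [a+c,a] := by
        rw [hr a c [a] [], z1, z2, hnil' (w [a,a]), hnil' (w [a])]
        simp only [hw, Finsupp.mapDomain_single]
        try module
      have Q4 : B (w [a,a]) (w [a,c]) =
          (f1 a a * f1 a a) • w [a,a,a,c] + (f1 a a * (f2 a a * cf a c)) • w [a,a,a+c] +
          (f1 a a * cf a a) • w [a,a+a,c] + (f2 a a * cf a c) • w [a,a+c,a] +
          (cf a a * cf a c) • w [a+a,a+c] := by
        rw [hr a a [a] [c], Q2, Q3, Q1]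
        simp only [hw, Finsupp.mapDomain_add, Finsupp.mapDomain_smul, Finsupp.mapDomain_single]
        try module
      have Q5 : B (w [a+a]) (w [a,c]) = cf (a+a) a • w [a+a+a,c] := by
        rw [hr (a+a) a [] [c], z5, z6, hnil (w [c])]
        simp only [hw, Finsupp.mapDomain_single]
        try module
      have Q6 : B (w [a]) (w [a,a,c]) =
          f1 a a • w [a,a,a,c] + (f2 a a * f1 a a) • w [a,a,a,c] +
          (f2 a a * (f2 a a * cf a c)) • w [a,a,a+c] + (f2 a a * cf a a) • w [a,a+a,c] +
          cf a a • w [a+a,a,c] := by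
        rw [hr a a [] [a,c], hnil, Q2, hnil (w [a,c])]
        simp only [hw, Finsupp.mapDomain_add, Finsupp.mapDomain_smul, Finsupp.mapDomain_single]
        try module
      have Q7 : B (w [a]) (w [a,a+c]) =
          f1 a a • w [a,a,a+c] + (f2 a a * cf a (a+c)) • w [a,a+(a+c)] +
          cf a a • w [a+a,a+c] := by
        rw [hr a a [] [a+c], hnil, Q1', hnil (w [a+c])]
        simp only [hw, Finsupp.mapDomain_smul, Finsupp.mapDomain_single]
        try module
      have Q8 : B (w [a]) (w [a+a,c]) = cf a (a+a) • w [a+(a+a),c] := by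
        rw [hr a (a+a) [] [c], hnil, z7, z8, hnil (w [c])]
        simp only [hw, Finsupp.mapDomain_single]
        try module
      have hA := hassoc (w [a]) (w [a]) (w [a,c])
      rw [P1 a a] at hA
      simp only [map_add, map_smul, LinearMap.add_apply, LinearMap.smul_apply] at hA
      rw [Q4, Q5, Q2] at hA
      simp only [map_add, map_smul] at hA
      rw [Q6, Q7, Q8] at hA
      have e1 := DFunLike.congr_fun hA [a+a,a,c]
      simp [hw, Finsupp.single_apply, List.cons_eq_cons, hac, hac.symm, ne1, ne2, ne3, ne4,
        add_right_inj, add_left_inj] at e1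
      have e2 := DFunLike.congr_fun hA [a,a+c,a]
      simp [hw, Finsupp.single_apply, List.cons_eq_cons, hac, hac.symm, ne1, ne2, ne3, ne4,
        add_right_inj, add_left_inj] at e2
      have hf1 : f1 a a = 0 := e1.resolve_right (hcf0 a a)
      refine ⟨hf1, ?_⟩
      have hz : f2 a a * f2 a a * cf a c = 0 := by
        linear_combination e2 - (f2 a a * cf a c) * hf1
      rcases mul_eq_zero.mp hz with h | h
      · rcases mul_eq_zero.mp h with h' | h' <;> exact h'
      · exact absurd h (hcf0 a c)
    left
    intro a b
    by_cases hab : a = b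
    · subst hab; exact hdiag a
    · exact hoff a b hab
  · -- shuffle case
    have hμ1 : μ 1 = 1 := by
      have h2 := R2 3 2 1 (by decide) (by decide) (by decide)
      rw [L1 3 2 (by decide), L1 3 1 (by decide), L1 2 1 (by decide)] at h2
      have e2 : μ 2 = μ 1 * μ 1 := (Lmul 1 1).symm
      rw [e2] at h2
      have e4 : μ 1 * (μ 1 * μ 1 * μ 1) = μ 1 * (μ 1 * μ 1) := by linear_combination h2
      have e5 := mul_left_cancel₀ h0 e4
      have e6 : μ 1 * (μ 1 * μ 1) = μ 1 * (μ 1 * 1) := by linear_combination e5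
      have e7 := mul_left_cancel₀ h0 e6
      have e8 : μ 1 * μ 1 = μ 1 * 1 := by linear_combination e7
      simpa using mul_left_cancel₀ h0 e8
    have hμall : ∀ n : ℕ+, μ n = 1 := by
      intro n; rw [Lpow, hμ1, one_pow]
    have hoff : ∀ x y : ℕ+, x ≠ y → f1 x y = 1 ∧ f2 x y = 1 := by
      intro x y hxy
      exact ⟨(L1 x y hxy).trans (hμall y), (L2 x y hxy).trans (hμall x)⟩
    have hdiag : ∀ a : ℕ+, f1 a a = 1 ∧ f2 a a = 1 := by
      intro a
      have hac : a ≠ a + a + a := by rw [add_assoc]; exact pltne a a a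
      have h2ac : a + a ≠ a + a + a := ne2 (a+a) a
      generalize hcg : a + a + a = c at hac h2ac
      obtain ⟨o1, o2⟩ := hoff a c hac
      obtain ⟨o3, o4⟩ := hoff (a+a) c h2ac
      obtain ⟨o5, o6⟩ := hoff a (a+c) (ne2 a c)
      have S1 : B (w [a]) (w [c]) = w [a,c] + w [c,a] + cf a c • w [a+c] := by
        rw [P1 a c, o1, o2]; module
      have S6 : B (w [a]) (w [a+c]) = w [a,a+c] + w [a+c,a] + cf a (a+c) • w [a+(a+c)] := by
        rw [P1 a (a+c), o5, o6]; module
      have S2 : B (w [a,a]) (w [c]) = w [a,a,c] + w [a,c,a] + cf a c • w [a,a+c] +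
          w [c,a,a] + cf a c • w [a+c,a] := by
        rw [hr a c [a] [], S1, hnil' (w [a,a]), hnil' (w [a]), o1, o2]
        simp only [hw, Finsupp.mapDomain_add, Finsupp.mapDomain_smul, Finsupp.mapDomain_single]
        try module
      have S3 : B (w [a+a]) (w [c]) = w [a+a,c] + w [c,a+a] + cf (a+a) c • w [a+a+c] := by
        rw [P1 (a+a) c, o3, o4]; module
      have S4 : B (w [a]) (w [a,c]) = f1 a a • w [a,a,c] +
          f2 a a • (w [a,a,c] + w [a,c,a] + cf a c • w [a,a+c]) + cf a a • w [a+a,c] := by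
        rw [hr a a [] [c], hnil, S1, hnil (w [c])]
        simp only [hw, Finsupp.mapDomain_add, Finsupp.mapDomain_smul, Finsupp.mapDomain_single]
        try module
      have S5 : B (w [a]) (w [c,a]) = w [a,c,a] + (f1 a a + f2 a a) • w [c,a,a] +
          cf a a • w [c,a+a] + cf a c • w [a+c,a] := by
        rw [hr a c [] [a], hnil, P1 a a, hnil (w [a]), o1, o2]
        simp only [hw, Finsupp.mapDomain_add, Finsupp.mapDomain_smul, Finsupp.mapDomain_single]
        try module
      have hB := hassoc (w [a]) (w [a]) (w [c])
      rw [P1 a a, S1] at hB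
      simp only [map_add, map_smul, LinearMap.add_apply, LinearMap.smul_apply] at hB
      rw [S2, S3, S4, S5, S6] at hB
      have e1 := DFunLike.congr_fun hB [a,c,a]
      simp [hw, Finsupp.single_apply, List.cons_eq_cons, hac, hac.symm, ne1, ne2, ne3, ne4,
        add_right_inj, add_left_inj] at e1
      have e2 := DFunLike.congr_fun hB [a+c,a]
      simp [hw, Finsupp.single_apply, List.cons_eq_cons, hac, hac.symm, ne1, ne2, ne3, ne4,
        add_right_inj, add_left_inj] at e2
      have hf1 : f1 a a = 1 := by linear_combination e1
      refine ⟨hf1, ?_⟩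
      have hz : (f2 a a - 1) * cf a c = 0 := by linear_combination e2 - cf a c * hf1
      rcases mul_eq_zero.mp hz with h | h
      · exact sub_eq_zero.mp h
      · exact absurd h (hcf0 a c)
    right
    intro a b
    by_cases hab : a = b
    · subst hab; exact hdiag a
    · exact hoff a b hab
end

section
/- Let ☐ be a weak stuffle product on K⟨X⟩ and Δ the deconcatenation coproduct. If Δ is an algebra morphism for ☐ (Δ(u ☐ v) = Δ(u) ☐ Δ(v) componentwise), then f₁(a⊗a) = f₂(a⊗a) = 1 for every letter a and f₁(a⊗b) = f₁(b⊗a) = 1 for all distinct letters a, b; that is, the underlying weak shuffle product is the classical shuffle product. -/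
open scoped TensorProduct

/-- The deconcatenation coproduct of a word:
`Δ(w) = Σ_{u·v = w} u ⊗ v`, valued in `K⟨X⟩ ⊗ K⟨X⟩`. -/
noncomputable def decon {X : Type*} (K : Type*) [Field K] (w : List X) :
    TensorProduct K (List X →₀ K) (List X →₀ K) :=
  ∑ i ∈ Finset.range (w.length + 1),
    (Finsupp.single (w.take i) (1 : K)) ⊗ₜ[K] (Finsupp.single (w.drop i) (1 : K))

noncomputable def wsPhi (K : Type*) [Field K] {X : Type*} (p q : List X) :
    TensorProduct K (List X →₀ K) (List X →₀ K) →ₗ[K] K :=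
  (TensorProduct.lid K K).toLinearMap ∘ₗ
    TensorProduct.map (Finsupp.lapply p) (Finsupp.lapply q)

lemma wsPhi_tmul {K : Type*} [Field K] {X : Type*} (p q : List X) (x y : List X →₀ K) :
    wsPhi K p q (x ⊗ₜ[K] y) = x p * y q := by
  simp [wsPhi, smul_eq_mul]

lemma wsPhi_decon {K : Type*} [Field K] {X : Type*} (p q : List X) (w : List X) :
    wsPhi K p q (decon K w) =
      ∑ i ∈ Finset.range (w.length + 1),
        (Finsupp.single (w.take i) (1:K)) p * (Finsupp.single (w.drop i) (1:K)) q := by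
  simp [decon, map_sum, wsPhi_tmul]

noncomputable def wsPsi (K : Type*) [Field K] {X : Type*} (p q : List X) :
    (List X →₀ K) →ₗ[K] K :=
  (wsPhi K p q) ∘ₗ Finsupp.linearCombination K (decon K)

lemma wsPsi_single {K : Type*} [Field K] {X : Type*} (p q : List X) (w : List X) (c : K) :
    wsPsi K p q (Finsupp.single w c) = c * wsPhi K p q (decon K w) := by
  simp [wsPsi, Finsupp.linearCombination_single, smul_eq_mul]

lemma wsPsi_fsum {K X Y : Type*} [Field K] (p q : List X) (h : Y →₀ K) (g : Y → List X) :
    wsPsi K p q (h.sum fun x c => c • Finsupp.single (g x) (1:K)) =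
      h.sum fun x c => c * wsPhi K p q (decon K (g x)) := by
  rw [map_finsuppSum]
  simp [wsPsi_single]

lemma mapd {K X Y : Type*} [Field K] (f : List X → List X) (h : Y →₀ K) (g : Y → List X) :
    Finsupp.mapDomain f (h.sum fun x c => c • Finsupp.single (g x) (1:K)) =
      h.sum fun x c => c • Finsupp.single (f (g x)) (1:K) := by
  rw [← Finsupp.lmapDomain_apply K K f, map_finsuppSum]
  simp [Finsupp.lmapDomain_apply, Finsupp.mapDomain_single]

/-- If the deconcatenation coproduct is an algebra morphism for a weak stuffle
product `☐`, then the underlying weak shuffle product is the classical shuffle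
product: `f₁(a⊗a) = f₂(a⊗a) = 1` for every letter `a` and
`f₁(a⊗b) = f₁(b⊗a) = 1` for all distinct letters `a, b`. -/
theorem weakStuffle_decon_implies_classical {K X : Type*} [Field K]
    [CharZero K] [Countable X]
    (B : (List X →₀ K) →ₗ[K] (List X →₀ K) →ₗ[K] (List X →₀ K))
    (f1 f2 : X → X → K) (f3 : X → X → (X →₀ K))
    (hcomm : ∀ x y, B x y = B y x)
    (hassoc : ∀ x y z, B (B x y) z = B x (B y z))
    (hunit : ∀ x, B (Finsupp.single [] 1) x = x)
    (hrec : ∀ (a b : X) (u v : List X),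
      B (Finsupp.single (a :: u) 1) (Finsupp.single (b :: v) 1) =
        f1 a b • Finsupp.mapDomain (a :: ·)
            (B (Finsupp.single u 1) (Finsupp.single (b :: v) 1)) +
        f2 a b • Finsupp.mapDomain (b :: ·)
            (B (Finsupp.single (a :: u) 1) (Finsupp.single v 1)) +
        (f3 a b).sum (fun x c => c • Finsupp.mapDomain (x :: ·)
            (B (Finsupp.single u 1) (Finsupp.single v 1))))
    (hΔ : ∀ u v : List X,
      (B (Finsupp.single u 1) (Finsupp.single v 1)).sum
          (fun w c => c • decon K w) =
        ∑ i ∈ Finset.range (u.length + 1), ∑ j ∈ Finset.range (v.length + 1),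
          (B (Finsupp.single (u.take i) 1) (Finsupp.single (v.take j) 1)) ⊗ₜ[K]
            (B (Finsupp.single (u.drop i) 1) (Finsupp.single (v.drop j) 1))) :
    (∀ a : X, f1 a a = 1 ∧ f2 a a = 1) ∧
    (∀ a b : X, a ≠ b → f1 a b = 1 ∧ f1 b a = 1) := by
  classical
  have hBnil : ∀ x, B x (Finsupp.single [] 1) = x := fun x => by rw [hcomm]; exact hunit x
  have hB1 : ∀ a b : X, B (Finsupp.single [a] 1) (Finsupp.single [b] 1) =
      f1 a b • Finsupp.single [a,b] 1 + f2 a b • Finsupp.single [b,a] 1 +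
      (f3 a b).sum (fun x c => c • Finsupp.single [x] (1:K)) := by
    intro a b
    rw [hrec a b [] []]
    simp only [hunit, hBnil, Finsupp.mapDomain_single]
  -- key coefficient identity
  have hkey : ∀ (p q u v : List X),
      wsPsi K p q (B (Finsupp.single u 1) (Finsupp.single v 1)) =
      ∑ i ∈ Finset.range (u.length+1), ∑ j ∈ Finset.range (v.length+1),
        (B (Finsupp.single (u.take i) 1) (Finsupp.single (v.take j) 1)) p *
        (B (Finsupp.single (u.drop i) 1) (Finsupp.single (v.drop j) 1)) q := by
    intro p q u v
    have h := congrArg (wsPhi K p q) (hΔ u v)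
    simp only [map_sum, wsPhi_tmul] at h
    rw [wsPsi, LinearMap.comp_apply, Finsupp.linearCombination_apply]
    exact h
  have L1 : ∀ a b : X, a ≠ b → f1 a b = 1 := by
    intro a b hab
    have h := hkey [a] [b] [a] [b]
    rw [hB1 a b] at h
    have e1 : wsPhi K [a] [b] (decon K [a,b]) = 1 := by
      simp [wsPhi_decon, Finset.sum_range_succ, Finsupp.single_apply]
    have e2 : wsPhi K [a] [b] (decon K [b,a]) = 0 := by
      simp [wsPhi_decon, Finset.sum_range_succ, Finsupp.single_apply, hab, hab.symm]
    have e3 : ∀ x : X, wsPhi K [a] [b] (decon K [x]) = 0 := by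
      intro x
      simp [wsPhi_decon, Finset.sum_range_succ, Finsupp.single_apply]
    rw [map_add, map_add, map_smul, map_smul, map_finsuppSum] at h
    simp only [wsPsi_single, smul_eq_mul, map_smul, e1, e2, e3, mul_one, mul_zero,
      Finsupp.sum, Finset.sum_const_zero, add_zero] at h
    -- now RHS
    simp only [Finset.sum_range_succ, Finset.sum_range_zero, List.length_cons,
      List.length_nil, List.take, List.drop, hunit, hBnil] at h
    simpa [Finsupp.single_apply, hab, hab.symm] using h
  have L2 : ∀ a : X, f1 a a + f2 a a = 2 := by
    intro a
    have h := hkey [a] [a] [a] [a]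
    rw [hB1 a a] at h
    have e1 : wsPhi K [a] [a] (decon K [a,a]) = 1 := by
      simp [wsPhi_decon, Finset.sum_range_succ, Finsupp.single_apply]
    have e3 : ∀ x : X, wsPhi K [a] [a] (decon K [x]) = 0 := fun x => by
      simp [wsPhi_decon, Finset.sum_range_succ, Finsupp.single_apply]
    rw [map_add, map_add, map_smul, map_smul, map_finsuppSum] at h
    simp only [map_smul, wsPsi_single, smul_eq_mul, e1, e3, mul_one, mul_zero,
      Finsupp.sum, Finset.sum_const_zero, add_zero] at h
    simp only [Finset.sum_range_succ, Finset.sum_range_zero, List.length_cons,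
      List.length_nil, List.take, List.drop, hunit, hBnil] at h
    simp only [Finsupp.single_apply] at h
    norm_num at h
    exact h
  have hBaa : ∀ a : X, (B (Finsupp.single [a] 1) (Finsupp.single [a] 1)) [a,a]
      = f1 a a + f2 a a := by
    intro a
    rw [hB1 a a, Finsupp.add_apply, Finsupp.add_apply, Finsupp.sum_apply]
    simp [Finsupp.single_apply]
  have md : ∀ (a : X) (h : X →₀ K),
      Finsupp.mapDomain (a :: ·) (h.sum fun x c => c • Finsupp.single [x] (1:K)) =
        h.sum fun x c => c • Finsupp.single [a,x] (1:K) :=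
    fun a h => mapd _ h (fun x => [x])
  have L3 : ∀ a : X, f2 a a = 1 := by
    intro a
    have h := hkey [a] [a,a] [a] [a,a]
    rw [hrec a a [] [a]] at h
    simp only [hunit, hBnil, Finsupp.mapDomain_single] at h
    rw [hB1 a a] at h
    simp only [Finsupp.mapDomain_add, Finsupp.mapDomain_smul, Finsupp.mapDomain_single,
      md] at h
    have d1 : wsPhi K [a] [a,a] (decon K [a,a,a]) = 1 := by
      simp [wsPhi_decon, Finset.sum_range_succ, Finsupp.single_apply]
    have d2 : ∀ x : X, wsPhi K [a] [a,a] (decon K [a,x]) = 0 := fun x => by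
      simp [wsPhi_decon, Finset.sum_range_succ, Finsupp.single_apply]
    have d3 : ∀ x : X, wsPhi K [a] [a,a] (decon K [x,a]) = 0 := fun x => by
      simp [wsPhi_decon, Finset.sum_range_succ, Finsupp.single_apply]
    simp only [map_add, map_smul, map_finsuppSum, wsPsi_single, smul_eq_mul,
      d1, d2, d3, mul_zero, mul_one, one_mul, Finsupp.sum, Finset.sum_const_zero, add_zero] at h
    simp only [Finset.sum_range_succ, Finset.sum_range_zero, List.length_cons,
      List.length_nil, List.take, List.drop, hunit, hBnil, hBaa] at h
    simp [Finsupp.single_apply, wsPsi_single, d2, d3] at h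
    linear_combination h - f2 a a * L2 a
  exact ⟨fun a => ⟨by linear_combination L2 a - L3 a, L3 a⟩,
    fun a b hab => ⟨L1 a b hab, L1 b a hab.symm⟩⟩
end
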